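/- arXiv:1412.8161 — 3 statements merged into one kernel-verified Lean document; each statement's English description precedes it below -/
import Mathlib

section
/- For the one-group shrinkage prior with a > 0 and any given c > 2, there exists a function h : ℝ × (0,1) → [0,∞) (depending on c) such that |T_τ(x) − x| ≤ h(x,τ) for all x ∈ ℝ and all τ ∈ (0,1), and for every ρ > c, lim_{τ → 0} sup_{|x| > √(ρ log(1/τ^{2a}))} h(x,τ) = 0. -/
open MeasureTheory Filter Set

noncomputable section

namespace OneGroup

/-- A one-group (global-local) shrinkage prior: the local variance `λ²` has density
`π(λ²) = K (λ²)^{-a-1} L(λ²)` on `(0,∞)`, where `L` is a positive, measurable,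
non-constant slowly varying function, bounded above by `M`, and bounded below by
`c₀` on `[t₀, ∞)`. -/
structure Prior where
  K : ℝ
  a : ℝ
  L : ℝ → ℝ
  M : ℝ
  c₀ : ℝ
  t₀ : ℝ
  K_pos : 0 < K
  a_pos : 0 < a
  L_pos : ∀ t : ℝ, 0 < t → 0 < L t
  L_meas : Measurable L
  L_slow : ∀ c : ℝ, 0 < c → Tendsto (fun t => L (c * t) / L t) atTop (nhds 1)
  L_nonconst : ∃ s : ℝ, 0 < s ∧ ∃ t : ℝ, 0 < t ∧ L s ≠ L t
  M_pos : 0 < M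
  L_le : ∀ t : ℝ, 0 < t → L t ≤ M
  c₀_pos : 0 < c₀
  t₀_pos : 0 < t₀
  L_ge : ∀ t : ℝ, t₀ ≤ t → c₀ ≤ L t

/-- The (unnormalized) posterior weight, as a function of `t = λ²`, entering all
posterior expectations of functions of the shrinkage coefficient `κ = 1/(1+tτ²)`. -/
def wt (P : Prior) (x τ t : ℝ) : ℝ :=
  (1 + t * τ ^ 2) ^ (-(1:ℝ)/2) * t ^ (-P.a - 1) * P.L t *
    Real.exp (-x ^ 2 / (2 * (1 + t * τ ^ 2)))

/-- Posterior expectation `E(g(κ) | x, τ)` of a function `g` of the shrinkage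
coefficient `κ = 1/(1+λ²τ²)`. -/
def postExp (P : Prior) (g : ℝ → ℝ) (x τ : ℝ) : ℝ :=
  (∫ t in Ioi (0:ℝ), g (1 / (1 + t * τ ^ 2)) * wt P x τ t) /
    (∫ t in Ioi (0:ℝ), wt P x τ t)

/-- The posterior mean `T_τ(x) = x (1 - E(κ | x, τ))`. -/
def T (P : Prior) (τ x : ℝ) : ℝ := x * (1 - postExp P (fun κ => κ) x τ)

/-- The marginal prior density `p_τ(θ)` of `θ`. -/
def pdens (P : Prior) (τ θ : ℝ) : ℝ :=
  ∫ u in Ioi (0:ℝ),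
    (Real.sqrt (2 * Real.pi * u * τ ^ 2))⁻¹ * Real.exp (-θ ^ 2 / (2 * u * τ ^ 2)) *
      (P.K * u ^ (-P.a - 1) * P.L u)

/-- The unnormalized posterior density of `θ` given an observation `x ~ N(θ,1)`. -/
def postw (P : Prior) (τ x θ : ℝ) : ℝ := Real.exp (-(x - θ) ^ 2 / 2) * pdens P τ θ

/-- The `k`-th posterior moment of `θ` given `x`. -/
def postMoment (P : Prior) (τ x : ℝ) (k : ℕ) : ℝ :=
  (∫ θ : ℝ, θ ^ k * postw P τ x θ) / (∫ θ : ℝ, postw P τ x θ)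

/-- The posterior variance `Var(θ | x)`. -/
def postVar (P : Prior) (τ x : ℝ) : ℝ := postMoment P τ x 2 - (postMoment P τ x 1) ^ 2

/-- The standard normal density. -/
def gauss (z : ℝ) : ℝ := (Real.sqrt (2 * Real.pi))⁻¹ * Real.exp (-z ^ 2 / 2)

/-- Expectation of `f(X)` for `X ~ N(θ, 1)`. -/
def E1 (θ : ℝ) (f : ℝ → ℝ) : ℝ := ∫ x : ℝ, f x * gauss (x - θ)

/-- Expectation of `f(X)` for `X ~ N_n(θ, I_n)`. -/
def EN (n : ℕ) (θ : Fin n → ℝ) (f : (Fin n → ℝ) → ℝ) : ℝ :=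
  ∫ x : Fin n → ℝ, f x * ∏ i, gauss (x i - θ i)

/-- The posterior probability `Π(A | x)` of a set `A ⊆ ℝⁿ` given data `x`,
for the coordinatewise-independent posterior. -/
def postProb (P : Prior) (τ : ℝ) {n : ℕ} (x : Fin n → ℝ) (A : Set (Fin n → ℝ)) : ℝ :=
  (∫ θ in A, ∏ i, postw P τ (x i) (θ i)) /
    (∫ θ : Fin n → ℝ, ∏ i, postw P τ (x i) (θ i))

/-- The set `l₀[p]` of nearly black vectors in `ℝⁿ`. -/
def nearlyBlack (n p : ℕ) : Set (Fin n → ℝ) :=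
  {θ | (Finset.univ.filter fun i => θ i ≠ 0).card ≤ p}

end OneGroup

open OneGroup

namespace BiasAux

/-- The dominating function `t ^ (-a-1) * L t`. -/
def Bf (P : Prior) (t : ℝ) : ℝ := t ^ (-P.a - 1) * P.L t

lemma Bf_meas (P : Prior) : Measurable (Bf P) := by
  unfold Bf
  have := P.L_meas
  measurability

lemma Bf_nonneg (P : Prior) {t : ℝ} (ht : 0 < t) : 0 ≤ Bf P t := by
  unfold Bf
  exact mul_nonneg (Real.rpow_nonneg ht.le _) (P.L_pos t ht).le

lemma wt_meas (P : Prior) (x τ : ℝ) : Measurable (wt P x τ) := by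
  unfold wt
  have := P.L_meas
  measurability

lemma wt_nonneg (P : Prior) (x τ : ℝ) {t : ℝ} (ht : 0 < t) : 0 ≤ wt P x τ t := by
  have h1 : (0:ℝ) < 1 + t * τ ^ 2 := by positivity
  unfold wt
  have := (P.L_pos t ht).le
  positivity

lemma wt_pos (P : Prior) (x τ : ℝ) {t : ℝ} (ht : 0 < t) : 0 < wt P x τ t := by
  have h1 : (0:ℝ) < 1 + t * τ ^ 2 := by positivity
  unfold wt
  have := P.L_pos t ht
  positivity

lemma one_le_base (τ t : ℝ) (ht : 0 < t) : (1:ℝ) ≤ 1 + t * τ ^ 2 := by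
  nlinarith [sq_nonneg τ, ht.le]

lemma wt_le_Bf (P : Prior) (x τ : ℝ) {t : ℝ} (ht : 0 < t) : wt P x τ t ≤ Bf P t := by
  have h1 : (0:ℝ) < 1 + t * τ ^ 2 := by positivity
  have hL := P.L_pos t ht
  have hrp : (0:ℝ) ≤ t ^ (-P.a-1) := Real.rpow_nonneg ht.le _
  have h2 : (1 + t * τ ^ 2) ^ (-(1:ℝ)/2) ≤ 1 :=
    Real.rpow_le_one_of_one_le_of_nonpos (one_le_base τ t ht) (by norm_num)
  have h3 : Real.exp (-x ^ 2 / (2 * (1 + t * τ ^ 2))) ≤ 1 := by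
    rw [Real.exp_le_one_iff]
    apply div_nonpos_of_nonpos_of_nonneg <;> nlinarith [sq_nonneg x]
  have h4 : (0:ℝ) < (1 + t * τ ^ 2) ^ (-(1:ℝ)/2) := Real.rpow_pos_of_pos h1 _
  calc wt P x τ t ≤ (1 + t * τ ^ 2) ^ (-(1:ℝ)/2) * t ^ (-P.a - 1) * P.L t * 1 := by
        unfold wt
        gcongr <;> first | exact mul_nonneg (mul_nonneg h4.le hrp) hL.le | exact h3
    _ ≤ 1 * t ^ (-P.a - 1) * P.L t * 1 := by
        gcongr <;> first | exact mul_nonneg hrp hL.le | exact h2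
    _ = Bf P t := by unfold Bf; ring

lemma Bf_int_Ioi1 (P : Prior) : IntegrableOn (Bf P) (Ioi (1:ℝ)) := by
  have hint : IntegrableOn (fun t : ℝ => P.M * t ^ (-P.a - 1)) (Ioi (1:ℝ)) :=
    (integrableOn_Ioi_rpow_of_lt (by linarith [P.a_pos]) one_pos).const_mul P.M
  refine MeasureTheory.Integrable.mono hint ((Bf_meas P).aestronglyMeasurable.restrict) ?_
  filter_upwards [MeasureTheory.ae_restrict_mem measurableSet_Ioi] with t ht
  have ht0 : (0:ℝ) < t := lt_trans one_pos ht
  rw [Real.norm_eq_abs, Real.norm_eq_abs, abs_of_nonneg (Bf_nonneg P ht0),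
    abs_of_nonneg (mul_nonneg P.M_pos.le (Real.rpow_nonneg ht0.le _))]
  unfold Bf
  rw [mul_comm P.M _]
  gcongr <;> first | exact Real.rpow_nonneg ht0.le _ | exact P.L_le t ht0

lemma Bf_int (P : Prior) (hI : IntegrableOn (Bf P) (Ioc (0:ℝ) 1)) :
    IntegrableOn (Bf P) (Ioi (0:ℝ)) := by
  rw [← Set.Ioc_union_Ioi_eq_Ioi (zero_le_one : (0:ℝ) ≤ 1)]
  exact hI.union (Bf_int_Ioi1 P)

lemma wt_int (P : Prior) (hI : IntegrableOn (Bf P) (Ioc (0:ℝ) 1)) (x τ : ℝ) :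
    IntegrableOn (wt P x τ) (Ioi (0:ℝ)) := by
  refine MeasureTheory.Integrable.mono (Bf_int P hI)
    ((wt_meas P x τ).aestronglyMeasurable.restrict) ?_
  filter_upwards [MeasureTheory.ae_restrict_mem measurableSet_Ioi] with t ht
  rw [Real.norm_eq_abs, Real.norm_eq_abs, abs_of_nonneg (wt_nonneg P x τ ht),
    abs_of_nonneg (Bf_nonneg P ht)]
  exact wt_le_Bf P x τ ht

lemma wt_not_int (P : Prior) (hnI : ¬ IntegrableOn (Bf P) (Ioc (0:ℝ) 1)) (x τ : ℝ) :
    ¬ IntegrableOn (wt P x τ) (Ioi (0:ℝ)) := by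
  intro hint
  apply hnI
  set C : ℝ := (1 + τ ^ 2) ^ ((1:ℝ)/2) * Real.exp (x ^ 2 / 2) with hC_def
  have hC : (0:ℝ) < C := by positivity
  have hint2 : IntegrableOn (fun t => C * wt P x τ t) (Ioc (0:ℝ) 1) :=
    ((hint.mono_set (Set.Ioc_subset_Ioi_self)).const_mul _)
  refine MeasureTheory.Integrable.mono hint2 ((Bf_meas P).aestronglyMeasurable.restrict) ?_
  filter_upwards [MeasureTheory.ae_restrict_mem measurableSet_Ioc] with t ht
  obtain ⟨ht0, ht1⟩ := ht
  have h1 : (0:ℝ) < 1 + t * τ ^ 2 := by positivity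
  have hwt := wt_nonneg P x τ ht0
  rw [Real.norm_eq_abs, Real.norm_eq_abs, abs_of_nonneg (Bf_nonneg P ht0),
    abs_of_nonneg (by positivity : (0:ℝ) ≤ C * wt P x τ t)]
  -- Bf ≤ C * wt
  have key : Bf P t ≤ C * wt P x τ t := by
    unfold Bf wt
    rw [hC_def]
    have e1 : ((1:ℝ) + τ ^ 2) ^ ((1:ℝ)/2) * (1 + t * τ ^ 2) ^ (-(1:ℝ)/2) ≥ 1 := by
      have h2 : (1 + t * τ ^ 2) ^ (-(1:ℝ)/2) ≥ (1 + τ ^ 2) ^ (-(1:ℝ)/2) := by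
        apply Real.rpow_le_rpow_of_nonpos h1 (by nlinarith [sq_nonneg τ]) (by norm_num)
      have h3 : (0:ℝ) < (1 + τ ^ 2) ^ ((1:ℝ)/2) := by positivity
      have h4 : ((1:ℝ) + τ ^ 2) ^ ((1:ℝ)/2) * (1 + τ ^ 2) ^ (-(1:ℝ)/2) = 1 := by
        rw [← Real.rpow_add (by positivity)]; norm_num
      calc (1:ℝ) = (1 + τ ^ 2) ^ ((1:ℝ)/2) * (1 + τ ^ 2) ^ (-(1:ℝ)/2) := h4.symm
        _ ≤ _ := by gcongr
    have e2 : Real.exp (x ^ 2 / 2) * Real.exp (-x ^ 2 / (2 * (1 + t * τ ^ 2))) ≥ 1 := by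
      rw [← Real.exp_add]
      apply Real.one_le_exp
      have hle : x ^ 2 / (2 * (1 + t * τ ^ 2)) ≤ x ^ 2 / 2 :=
        div_le_div_of_nonneg_left (sq_nonneg x) two_pos (by nlinarith [mul_nonneg ht0.le (sq_nonneg τ)])
      rw [neg_div]
      linarith
    have hrp : (0:ℝ) ≤ t ^ (-P.a-1) := Real.rpow_nonneg ht0.le _
    have hL := P.L_pos t ht0
    calc t ^ (-P.a - 1) * P.L t
        = 1 * 1 * (t ^ (-P.a - 1) * P.L t) := by ring
      _ ≤ (((1:ℝ) + τ ^ 2) ^ ((1:ℝ)/2) * (1 + t * τ ^ 2) ^ (-(1:ℝ)/2)) *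
          (Real.exp (x ^ 2 / 2) * Real.exp (-x ^ 2 / (2 * (1 + t * τ ^ 2)))) *
          (t ^ (-P.a - 1) * P.L t) := by
          gcongr <;> first | exact mul_nonneg hrp hL.le | exact e1 | exact e2
      _ = (1 + τ ^ 2) ^ ((1:ℝ)/2) * Real.exp (x ^ 2 / 2) *
          ((1 + t * τ ^ 2) ^ (-(1:ℝ)/2) * t ^ (-P.a - 1) * P.L t *
            Real.exp (-x ^ 2 / (2 * (1 + t * τ ^ 2)))) := by ring
  exact key

/-- `exp (-v) ≤ k^k * v^(-k)` for positive `k, v`. -/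
lemma exp_neg_le {k v : ℝ} (hk : 0 < k) (hv : 0 < v) :
    Real.exp (-v) ≤ k ^ k * v ^ (-k) := by
  rw [Real.rpow_def_of_pos hk, Real.rpow_def_of_pos hv, ← Real.exp_add, Real.exp_le_exp]
  have h := Real.log_le_sub_one_of_pos (show (0:ℝ) < v / k by positivity)
  rw [Real.log_div hv.ne' hk.ne'] at h
  have : k * (Real.log v - Real.log k) ≤ k * (v / k - 1) := by
    apply mul_le_mul_of_nonneg_left h hk.le
  have hk' : k * (v / k) = v := by field_simp
  nlinarith


/-- Numerator integrand. -/
def nf (P : Prior) (x τ t : ℝ) : ℝ := 1 / (1 + t * τ ^ 2) * wt P x τ t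

lemma nf_meas (P : Prior) (x τ : ℝ) : Measurable (nf P x τ) := by
  unfold nf
  exact (measurable_const.div ((measurable_const.add (measurable_id.mul_const _)))).mul
    (wt_meas P x τ)

lemma nf_nonneg (P : Prior) (x τ : ℝ) {t : ℝ} (ht : 0 < t) : 0 ≤ nf P x τ t := by
  have h1 : (0:ℝ) < 1 + t * τ ^ 2 := by positivity
  exact mul_nonneg (by positivity) (wt_nonneg P x τ ht)

lemma nf_le_wt (P : Prior) (x τ : ℝ) {t : ℝ} (ht : 0 < t) : nf P x τ t ≤ wt P x τ t := by
  have h1 : (0:ℝ) < 1 + t * τ ^ 2 := by positivity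
  have h2 : 1 / (1 + t * τ ^ 2) ≤ 1 := by
    rw [div_le_one h1]; exact one_le_base τ t ht
  calc nf P x τ t ≤ 1 * wt P x τ t := by
        unfold nf; gcongr; exact wt_nonneg P x τ ht
    _ = wt P x τ t := one_mul _

lemma nf_int (P : Prior) (hI : IntegrableOn (Bf P) (Ioc (0:ℝ) 1)) (x τ : ℝ) :
    IntegrableOn (nf P x τ) (Ioi (0:ℝ)) := by
  refine MeasureTheory.Integrable.mono (wt_int P hI x τ)
    ((nf_meas P x τ).aestronglyMeasurable.restrict) ?_
  filter_upwards [MeasureTheory.ae_restrict_mem measurableSet_Ioi] with t ht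
  rw [Real.norm_eq_abs, Real.norm_eq_abs, abs_of_nonneg (nf_nonneg P x τ ht),
    abs_of_nonneg (wt_nonneg P x τ ht)]
  exact nf_le_wt P x τ ht

/-- Constants. -/
def Iconst (P : Prior) : ℝ := (∫ t in Ioc (0:ℝ) 1, Bf P t) + P.M / P.a

def kExp (P : Prior) : ℝ := P.a + 5/4

def C5 (P : Prior) (δ : ℝ) : ℝ :=
  P.M * 2 ^ kExp P * kExp P ^ kExp P * (1 + 1/δ) ^ P.a

def C6 (P : Prior) (δ : ℝ) : ℝ := 4 * δ ^ (-(1:ℝ)/4) * C5 P δ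

def CD (P : Prior) : ℝ := P.c₀ * Real.exp (-(1:ℝ)/2) * 2 ^ (-P.a-1) * 3 ^ (-(1:ℝ)/2)

lemma Iconst_nonneg (P : Prior) : 0 ≤ Iconst P := by
  unfold Iconst
  have h1 : 0 ≤ ∫ t in Ioc (0:ℝ) 1, Bf P t := by
    apply MeasureTheory.setIntegral_nonneg measurableSet_Ioc
    exact fun t ht => Bf_nonneg P ht.1
  have h2 : 0 ≤ P.M / P.a := div_nonneg P.M_pos.le P.a_pos.le
  linarith

lemma C5_pos (P : Prior) {δ : ℝ} (hδ : 0 < δ) : 0 < C5 P δ := by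
  unfold C5
  have h1 : (0:ℝ) < kExp P := by unfold kExp; linarith [P.a_pos]
  have := P.M_pos
  positivity

lemma C6_pos (P : Prior) {δ : ℝ} (hδ : 0 < δ) : 0 < C6 P δ := by
  unfold C6
  have := C5_pos P hδ
  positivity

lemma CD_pos (P : Prior) : 0 < CD P := by
  unfold CD
  have := P.c₀_pos
  positivity


/-- Lower bound on the denominator integral. -/
lemma D_lower (P : Prior) (hI : IntegrableOn (Bf P) (Ioc (0:ℝ) 1)) {τ x : ℝ}
    (hτ0 : 0 < τ) (hx1 : 1 ≤ x ^ 2) (ht₀u : P.t₀ ≤ x ^ 2 / τ ^ 2) :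
    CD P * (x ^ 2) ^ (-(P.a + 2⁻¹)) * (τ ^ 2) ^ P.a ≤ ∫ t in Ioi (0:ℝ), wt P x τ t := by
  have hw : (0:ℝ) < τ ^ 2 := by positivity
  have hx0 : (0:ℝ) < x ^ 2 := by linarith
  set u : ℝ := x ^ 2 / τ ^ 2 with hu_def
  have hu : 0 < u := by positivity
  set m : ℝ := (1 + 2 * x ^ 2) ^ (-(1:ℝ)/2) * (2 * u) ^ (-P.a - 1) * P.c₀ *
    Real.exp (-(1:ℝ)/2) with hm_def
  have hm : 0 < m := by
    have h1 : (0:ℝ) < 1 + 2 * x ^ 2 := by positivity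
    have := P.c₀_pos
    rw [hm_def]
    positivity
  -- pointwise lower bound on Ioc u (2u)
  have hpt : ∀ t ∈ Ioc u (2 * u), m ≤ wt P x τ t := by
    intro t ht
    obtain ⟨ht1, ht2⟩ := ht
    have ht0 : 0 < t := lt_trans hu ht1
    have hb : (0:ℝ) < 1 + t * τ ^ 2 := by positivity
    have huw : u * τ ^ 2 = x ^ 2 := by rw [hu_def]; field_simp
    have f1 : (1 + 2 * x ^ 2) ^ (-(1:ℝ)/2) ≤ (1 + t * τ ^ 2) ^ (-(1:ℝ)/2) := by
      apply Real.rpow_le_rpow_of_nonpos hb _ (by norm_num)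
      nlinarith [mul_le_mul_of_nonneg_right ht2 hw.le]
    have f2 : (2 * u) ^ (-P.a - 1) ≤ t ^ (-P.a - 1) := by
      apply Real.rpow_le_rpow_of_nonpos ht0 ht2 (by linarith [P.a_pos])
    have f3 : P.c₀ ≤ P.L t := P.L_ge t (le_trans ht₀u ht1.le)
    have f4 : Real.exp (-(1:ℝ)/2) ≤ Real.exp (-x ^ 2 / (2 * (1 + t * τ ^ 2))) := by
      rw [Real.exp_le_exp]
      rw [neg_div, neg_div, neg_le_neg_iff]
      rw [div_le_div_iff₀ (by positivity) (by norm_num)]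
      nlinarith [mul_le_mul_of_nonneg_right ht1.le hw.le]
    have hf2nn : (0:ℝ) ≤ (2 * u) ^ (-P.a - 1) := Real.rpow_nonneg (by positivity) _
    have hf1nn : (0:ℝ) ≤ (1 + 2 * x ^ 2) ^ (-(1:ℝ)/2) := Real.rpow_nonneg (by positivity) _
    calc m = (1 + 2 * x ^ 2) ^ (-(1:ℝ)/2) * (2 * u) ^ (-P.a - 1) * P.c₀ *
          Real.exp (-(1:ℝ)/2) := hm_def
      _ ≤ (1 + t * τ ^ 2) ^ (-(1:ℝ)/2) * t ^ (-P.a - 1) * P.L t *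
          Real.exp (-x ^ 2 / (2 * (1 + t * τ ^ 2))) := by
          have h5 : (0:ℝ) ≤ (1 + t * τ ^ 2) ^ (-(1:ℝ)/2) := Real.rpow_nonneg hb.le _
          have h6 : (0:ℝ) ≤ t ^ (-P.a - 1) := Real.rpow_nonneg ht0.le _
          exact mul_le_mul
            (mul_le_mul (mul_le_mul f1 f2 hf2nn h5) f3 P.c₀_pos.le (mul_nonneg h5 h6))
            f4 (Real.exp_pos _).le
            (mul_nonneg (mul_nonneg h5 h6) (P.L_pos t ht0).le)
      _ = wt P x τ t := rfl
  -- integral over the interval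
  have hsub : Ioc u (2 * u) ⊆ Ioi (0:ℝ) := fun t ht => lt_trans hu ht.1
  have hmono : ∫ t in Ioc u (2 * u), wt P x τ t ≤ ∫ t in Ioi (0:ℝ), wt P x τ t := by
    apply MeasureTheory.setIntegral_mono_set (wt_int P hI x τ)
    · filter_upwards [MeasureTheory.ae_restrict_mem measurableSet_Ioi] with t ht
      exact wt_nonneg P x τ ht
    · exact HasSubset.Subset.eventuallyLE hsub
  have hconst : ∫ t in Ioc u (2 * u), m ≤ ∫ t in Ioc u (2 * u), wt P x τ t := by
    apply MeasureTheory.setIntegral_mono_on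
    · exact MeasureTheory.integrableOn_const (by
        rw [Real.volume_Ioc]; exact ENNReal.ofReal_ne_top)
    · exact (wt_int P hI x τ).mono_set hsub
    · exact measurableSet_Ioc
    · exact hpt
  have hval : (∫ t in Ioc u (2 * u), m) = u * m := by
    rw [MeasureTheory.setIntegral_const, MeasureTheory.measureReal_def, Real.volume_Ioc, smul_eq_mul,
      ENNReal.toReal_ofReal (by linarith : (0:ℝ) ≤ 2 * u - u)]
    ring_nf
  -- algebra: CD * (x²)^(-(a+1/2)) * (τ²)^a ≤ u * m
  have halg : CD P * (x ^ 2) ^ (-(P.a + 2⁻¹)) * (τ ^ 2) ^ P.a ≤ u * m := by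
    have e1 : (2 * u) ^ (-P.a - 1) = 2 ^ (-P.a - 1) * u ^ (-P.a - 1) :=
      Real.mul_rpow (by norm_num) hu.le
    have e2 : u * u ^ (-P.a - 1) = u ^ (-P.a) := by
      nth_rewrite 1 [← Real.rpow_one u]
      rw [← Real.rpow_add hu]; ring_nf
    have e3 : u ^ (-P.a) = (x ^ 2) ^ (-P.a) * (τ ^ 2) ^ P.a := by
      rw [hu_def, Real.rpow_neg (by positivity), Real.div_rpow (sq_nonneg x) hw.le,
        inv_div, div_eq_inv_mul, ← Real.rpow_neg (sq_nonneg x)]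
    have e4 : (3:ℝ) ^ (-(1:ℝ)/2) * (x ^ 2) ^ (-(1:ℝ)/2) ≤ (1 + 2 * x ^ 2) ^ (-(1:ℝ)/2) := by
      rw [← Real.mul_rpow (by norm_num) (sq_nonneg x)]
      apply Real.rpow_le_rpow_of_nonpos (by positivity) (by nlinarith) (by norm_num)
    have e5 : (x ^ 2) ^ (-P.a) * (x ^ 2) ^ (-(1:ℝ)/2) = (x ^ 2) ^ (-(P.a + 2⁻¹)) := by
      rw [← Real.rpow_add hx0]; ring_nf
    calc CD P * (x ^ 2) ^ (-(P.a + 2⁻¹)) * (τ ^ 2) ^ P.a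
        = (P.c₀ * Real.exp (-(1:ℝ)/2) * 2 ^ (-P.a-1)) *
          ((3:ℝ) ^ (-(1:ℝ)/2) * (x ^ 2) ^ (-(1:ℝ)/2)) *
          ((x ^ 2) ^ (-P.a) * (τ ^ 2) ^ P.a) := by
          rw [← e5]; unfold CD; ring
      _ ≤ (P.c₀ * Real.exp (-(1:ℝ)/2) * 2 ^ (-P.a-1)) *
          ((1 + 2 * x ^ 2) ^ (-(1:ℝ)/2)) *
          ((x ^ 2) ^ (-P.a) * (τ ^ 2) ^ P.a) := by
          have hnn1 : (0:ℝ) ≤ P.c₀ * Real.exp (-(1:ℝ)/2) * 2 ^ (-P.a-1) := by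
            have := P.c₀_pos; positivity
          have hnn2 : (0:ℝ) ≤ (x ^ 2) ^ (-P.a) * (τ ^ 2) ^ P.a := by positivity
          exact mul_le_mul_of_nonneg_right (mul_le_mul_of_nonneg_left e4 hnn1) hnn2
      _ = u * m := by
          rw [hm_def, e1, ← e3, ← e2]; ring
  linarith

/-- Bound on the small-`t` part of the numerator. -/
lemma N_small (P : Prior) (hI : IntegrableOn (Bf P) (Ioc (0:ℝ) 1)) {τ x δ : ℝ}
    (hτ0 : 0 < τ) (hδ : 0 < δ) (hs1 : τ ^ 2 ≤ δ) :
    ∫ t in Ioc (0:ℝ) (δ / τ ^ 2), nf P x τ t ≤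
      Iconst P * Real.exp (-x ^ 2 / (2 * (1 + δ))) := by
  have hw : (0:ℝ) < τ ^ 2 := by positivity
  set s : ℝ := δ / τ ^ 2 with hs_def
  have hs0 : 0 < s := by positivity
  have hs1' : 1 ≤ s := by rw [hs_def, le_div_iff₀ hw]; linarith
  set E : ℝ := Real.exp (-x ^ 2 / (2 * (1 + δ))) with hE_def
  have hE : 0 < E := Real.exp_pos _
  -- pointwise bound
  have hpt : ∀ t ∈ Ioc (0:ℝ) s, nf P x τ t ≤ E * Bf P t := by
    intro t ht
    obtain ⟨ht0, hts⟩ := ht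
    have hb : (0:ℝ) < 1 + t * τ ^ 2 := by positivity
    have htw : t * τ ^ 2 ≤ δ := by
      calc t * τ ^ 2 ≤ s * τ ^ 2 := by nlinarith
        _ = δ := by rw [hs_def]; field_simp
    have f1 : 1 / (1 + t * τ ^ 2) ≤ 1 := by
      rw [div_le_one hb]; exact one_le_base τ t ht0
    have f2 : (1 + t * τ ^ 2) ^ (-(1:ℝ)/2) ≤ 1 :=
      Real.rpow_le_one_of_one_le_of_nonpos (one_le_base τ t ht0) (by norm_num)
    have f3 : Real.exp (-x ^ 2 / (2 * (1 + t * τ ^ 2))) ≤ E := by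
      rw [hE_def, Real.exp_le_exp, neg_div, neg_div, neg_le_neg_iff,
        div_le_div_iff₀ (by positivity) (by positivity)]
      nlinarith [sq_nonneg x, htw]
    have h6 : (0:ℝ) ≤ t ^ (-P.a - 1) := Real.rpow_nonneg ht0.le _
    have hL := P.L_pos t ht0
    calc nf P x τ t
        = (1 / (1 + t * τ ^ 2)) * ((1 + t * τ ^ 2) ^ (-(1:ℝ)/2)) *
          (t ^ (-P.a - 1) * P.L t) * Real.exp (-x ^ 2 / (2 * (1 + t * τ ^ 2))) := by
          unfold nf wt; ring
      _ ≤ 1 * 1 * (t ^ (-P.a - 1) * P.L t) * E := by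
          exact mul_le_mul
            (mul_le_mul (mul_le_mul f1 f2 (Real.rpow_nonneg hb.le _) (by positivity))
              le_rfl (mul_nonneg h6 hL.le) (by norm_num))
            f3 (Real.exp_pos _).le
            (mul_nonneg (mul_nonneg zero_le_one zero_le_one) (mul_nonneg h6 hL.le))
      _ = E * Bf P t := by unfold Bf; ring
  -- integrate
  have hBs : IntegrableOn (fun t => E * Bf P t) (Ioc (0:ℝ) s) :=
    ((Bf_int P hI).mono_set (Set.Ioc_subset_Ioi_self)).const_mul E
  have h1 : ∫ t in Ioc (0:ℝ) s, nf P x τ t ≤ ∫ t in Ioc (0:ℝ) s, E * Bf P t := by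
    apply MeasureTheory.setIntegral_mono_on
    · exact (nf_int P hI x τ).mono_set (Set.Ioc_subset_Ioi_self)
    · exact hBs
    · exact measurableSet_Ioc
    · exact hpt
  have h2 : ∫ t in Ioc (0:ℝ) s, E * Bf P t = E * ∫ t in Ioc (0:ℝ) s, Bf P t :=
    MeasureTheory.integral_const_mul E _
  -- ∫_{Ioc 0 s} Bf ≤ Iconst
  have h3 : ∫ t in Ioc (0:ℝ) s, Bf P t ≤ Iconst P := by
    have hsplit : Ioc (0:ℝ) s = Ioc (0:ℝ) 1 ∪ Ioc 1 s :=
      (Set.Ioc_union_Ioc_eq_Ioc zero_le_one hs1').symm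
    rw [hsplit, MeasureTheory.setIntegral_union (Set.Ioc_disjoint_Ioc_of_le le_rfl)
      measurableSet_Ioc (hI) ((Bf_int P hI).mono_set
        (fun t ht => lt_trans one_pos ht.1))]
    have hMint : IntegrableOn (fun t : ℝ => P.M * t ^ (-P.a - 1)) (Ioi (1:ℝ)) :=
      (integrableOn_Ioi_rpow_of_lt (by linarith [P.a_pos]) one_pos).const_mul P.M
    have hb1 : ∫ t in Ioc (1:ℝ) s, Bf P t ≤ ∫ t in Ioc (1:ℝ) s, P.M * t ^ (-P.a - 1) := by
      apply MeasureTheory.setIntegral_mono_on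
      · exact (Bf_int P hI).mono_set (fun t ht => lt_trans one_pos ht.1)
      · exact hMint.mono_set Set.Ioc_subset_Ioi_self
      · exact measurableSet_Ioc
      · intro t ht
        have ht0 : (0:ℝ) < t := lt_trans one_pos ht.1
        unfold Bf
        rw [mul_comm P.M _]
        gcongr <;> first | exact Real.rpow_nonneg ht0.le _ | exact P.L_le t ht0
    have hb2 : ∫ t in Ioc (1:ℝ) s, P.M * t ^ (-P.a - 1) ≤
        ∫ t in Ioi (1:ℝ), P.M * t ^ (-P.a - 1) := by
      apply MeasureTheory.setIntegral_mono_set hMint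
      · filter_upwards [MeasureTheory.ae_restrict_mem measurableSet_Ioi] with t ht
        have ht0 : (0:ℝ) < t := lt_trans one_pos ht
        exact mul_nonneg P.M_pos.le (Real.rpow_nonneg ht0.le _)
      · exact HasSubset.Subset.eventuallyLE Set.Ioc_subset_Ioi_self
    have hb3 : ∫ t in Ioi (1:ℝ), P.M * t ^ (-P.a - 1) = P.M / P.a := by
      rw [MeasureTheory.integral_const_mul, integral_Ioi_rpow_of_lt
        (by linarith [P.a_pos]) one_pos]
      rw [show -P.a - 1 + 1 = -P.a by ring, Real.one_rpow]
      field_simp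
    have h4 : ∫ t in Ioc (1:ℝ) s, Bf P t ≤ P.M / P.a := by
      rw [← hb3]; exact le_trans hb1 hb2
    unfold Iconst
    linarith [h4]
  calc ∫ t in Ioc (0:ℝ) s, nf P x τ t ≤ E * ∫ t in Ioc (0:ℝ) s, Bf P t := by
        rw [← h2]; exact h1
    _ ≤ E * Iconst P := by gcongr
    _ = Iconst P * E := by ring

/-- Bound on the large-`t` part of the numerator. -/
lemma N_large (P : Prior) (hI : IntegrableOn (Bf P) (Ioc (0:ℝ) 1)) {τ x δ : ℝ}
    (hτ0 : 0 < τ) (hδ : 0 < δ) (hx0 : x ≠ 0) :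
    ∫ t in Ioi (δ / τ ^ 2), nf P x τ t ≤
      C6 P δ * (x ^ 2) ^ (-kExp P) * (τ ^ 2) ^ P.a := by
  have hw : (0:ℝ) < τ ^ 2 := by positivity
  have hx2 : (0:ℝ) < x ^ 2 := by positivity
  set k : ℝ := kExp P with hk_def
  have hk : 0 < k := by rw [hk_def]; unfold kExp; linarith [P.a_pos]
  set s : ℝ := δ / τ ^ 2 with hs_def
  have hs0 : 0 < s := by positivity
  -- pointwise bound
  have hpt : ∀ t ∈ Ioi s, nf P x τ t ≤
      C5 P δ * (x ^ 2) ^ (-k) * (τ ^ 2) ^ (P.a - 4⁻¹) * t ^ (-(5/4 : ℝ)) := by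
    intro t ht
    rw [mem_Ioi] at ht
    have ht0 : 0 < t := lt_trans hs0 ht
    set q : ℝ := 1 + t * τ ^ 2 with hq_def
    have hq : (0:ℝ) < q := by rw [hq_def]; positivity
    have htw0 : (0:ℝ) < t * τ ^ 2 := by positivity
    have htw : δ ≤ t * τ ^ 2 := by
      calc δ = s * τ ^ 2 := by rw [hs_def]; field_simp
        _ ≤ t * τ ^ 2 := by nlinarith
    have hv : (0:ℝ) < x ^ 2 / (2 * q) := by positivity
    have f_exp : Real.exp (-x ^ 2 / (2 * q)) ≤ k ^ k * (x ^ 2 / (2 * q)) ^ (-k) := by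
      rw [neg_div]
      exact exp_neg_le hk hv
    have f_v : (x ^ 2 / (2 * q)) ^ (-k) = (x ^ 2) ^ (-k) * (2 ^ k * q ^ k) := by
      rw [Real.div_rpow (sq_nonneg x) (by positivity), Real.rpow_neg
        (by positivity : (0:ℝ) ≤ 2 * q), div_inv_eq_mul, Real.mul_rpow (by norm_num) hq.le]
    have f_pow : 1 / q * q ^ (-(1:ℝ)/2) * q ^ k = q ^ (P.a - 4⁻¹) := by
      rw [one_div, ← Real.rpow_neg_one q, ← Real.rpow_add hq, ← Real.rpow_add hq]
      congr 1
      rw [hk_def]; unfold kExp; ring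
    have f_split : q ^ (P.a - 4⁻¹) ≤ (1 + 1/δ) ^ P.a * ((τ ^ 2) ^ (P.a - 4⁻¹) *
        t ^ (P.a - 4⁻¹)) := by
      have g1 : q ^ (P.a - 4⁻¹) = q ^ P.a * q ^ (-(4⁻¹:ℝ)) := by
        rw [← Real.rpow_add hq]; ring_nf
      have hfrac : (0:ℝ) ≤ (t * τ ^ 2 - δ) / δ := div_nonneg (by linarith) hδ.le
      have hqle : q ≤ (1 + 1/δ) * (t * τ ^ 2) := by
        have key : (1 + 1/δ) * (t * τ ^ 2) - q = (t * τ ^ 2 - δ) / δ := by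
          rw [hq_def]; field_simp; ring
        linarith
      have g2 : q ^ P.a ≤ ((1 + 1/δ) * (t * τ ^ 2)) ^ P.a :=
        Real.rpow_le_rpow hq.le hqle P.a_pos.le
      have g3 : q ^ (-(4⁻¹:ℝ)) ≤ (t * τ ^ 2) ^ (-(4⁻¹:ℝ)) :=
        Real.rpow_le_rpow_of_nonpos htw0 (by rw [hq_def]; linarith) (by norm_num)
      have g4 : ((1 + 1/δ) * (t * τ ^ 2)) ^ P.a = (1 + 1/δ) ^ P.a * (t * τ ^ 2) ^ P.a :=
        Real.mul_rpow (by positivity) htw0.le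
      have g5 : (t * τ ^ 2) ^ P.a * (t * τ ^ 2) ^ (-(4⁻¹:ℝ)) = (t * τ ^ 2) ^ (P.a - 4⁻¹) := by
        rw [← Real.rpow_add htw0]; ring_nf
      have g6 : (t * τ ^ 2) ^ (P.a - 4⁻¹) = t ^ (P.a - 4⁻¹) * (τ ^ 2) ^ (P.a - 4⁻¹) :=
        Real.mul_rpow ht0.le hw.le
      calc q ^ (P.a - 4⁻¹) = q ^ P.a * q ^ (-(4⁻¹:ℝ)) := g1
        _ ≤ ((1 + 1/δ) * (t * τ ^ 2)) ^ P.a * (t * τ ^ 2) ^ (-(4⁻¹:ℝ)) :=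
            mul_le_mul g2 g3 (Real.rpow_nonneg hq.le _) (Real.rpow_nonneg (by positivity) _)
        _ = (1 + 1/δ) ^ P.a * ((t * τ ^ 2) ^ P.a * (t * τ ^ 2) ^ (-(4⁻¹:ℝ))) := by
            rw [g4]; ring
        _ = (1 + 1/δ) ^ P.a * ((τ ^ 2) ^ (P.a - 4⁻¹) * t ^ (P.a - 4⁻¹)) := by
            rw [g5, g6]; ring
    have f_t : t ^ (P.a - 4⁻¹) * t ^ (-P.a - 1) = t ^ (-(5/4 : ℝ)) := by
      rw [← Real.rpow_add ht0]; ring_nf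
    have hlead : (0:ℝ) ≤ 1 / q * q ^ (-(1:ℝ)/2) * t ^ (-P.a - 1) :=
      mul_nonneg (mul_nonneg (by positivity) (Real.rpow_nonneg hq.le _))
        (Real.rpow_nonneg ht0.le _)
    have hMk : (0:ℝ) ≤ P.M * k ^ k * 2 ^ k * (x ^ 2) ^ (-k) := by
      have := P.M_pos
      have h1 : (0:ℝ) ≤ k ^ k := Real.rpow_nonneg hk.le _
      have h2 : (0:ℝ) ≤ (2:ℝ) ^ k := Real.rpow_nonneg (by norm_num) _
      have h3 : (0:ℝ) ≤ (x ^ 2) ^ (-k) := Real.rpow_nonneg (sq_nonneg x) _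
      positivity
    calc nf P x τ t
        = (1 / q * q ^ (-(1:ℝ)/2) * t ^ (-P.a - 1)) *
          (P.L t * Real.exp (-x ^ 2 / (2 * q))) := by
          unfold nf wt; rw [← hq_def]; ring
      _ ≤ (1 / q * q ^ (-(1:ℝ)/2) * t ^ (-P.a - 1)) *
          (P.M * (k ^ k * (x ^ 2 / (2 * q)) ^ (-k))) := by
          apply mul_le_mul_of_nonneg_left _ hlead
          exact mul_le_mul (P.L_le t ht0) f_exp (Real.exp_pos _).le P.M_pos.le
      _ = (P.M * k ^ k * 2 ^ k * (x ^ 2) ^ (-k)) *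
          (1 / q * q ^ (-(1:ℝ)/2) * q ^ k) * t ^ (-P.a - 1) := by
          rw [f_v]; ring
      _ = (P.M * k ^ k * 2 ^ k * (x ^ 2) ^ (-k)) * q ^ (P.a - 4⁻¹) * t ^ (-P.a - 1) := by
          rw [f_pow]
      _ ≤ (P.M * k ^ k * 2 ^ k * (x ^ 2) ^ (-k)) *
          ((1 + 1/δ) ^ P.a * ((τ ^ 2) ^ (P.a - 4⁻¹) * t ^ (P.a - 4⁻¹))) * t ^ (-P.a - 1) := by
          apply mul_le_mul_of_nonneg_right (mul_le_mul_of_nonneg_left f_split hMk)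
            (Real.rpow_nonneg ht0.le _)
      _ = C5 P δ * (x ^ 2) ^ (-k) * (τ ^ 2) ^ (P.a - 4⁻¹) * (t ^ (P.a - 4⁻¹) * t ^ (-P.a - 1)) := by
          rw [hk_def]; unfold C5; ring
      _ = C5 P δ * (x ^ 2) ^ (-k) * (τ ^ 2) ^ (P.a - 4⁻¹) * t ^ (-(5/4 : ℝ)) := by
          rw [f_t]
  -- integrate
  have hrint : IntegrableOn (fun t : ℝ =>
      C5 P δ * (x ^ 2) ^ (-k) * (τ ^ 2) ^ (P.a - 4⁻¹) * t ^ (-(5/4 : ℝ))) (Ioi s) :=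
    (integrableOn_Ioi_rpow_of_lt (by norm_num) hs0).const_mul _
  have h1 : ∫ t in Ioi s, nf P x τ t ≤
      ∫ t in Ioi s, C5 P δ * (x ^ 2) ^ (-k) * (τ ^ 2) ^ (P.a - 4⁻¹) * t ^ (-(5/4 : ℝ)) := by
    apply MeasureTheory.setIntegral_mono_on
    · exact (nf_int P hI x τ).mono_set (fun t ht => lt_trans hs0 ht)
    · exact hrint
    · exact measurableSet_Ioi
    · exact hpt
  have h2 : ∫ t in Ioi s, C5 P δ * (x ^ 2) ^ (-k) * (τ ^ 2) ^ (P.a - 4⁻¹) * t ^ (-(5/4 : ℝ))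
      = C5 P δ * (x ^ 2) ^ (-k) * (τ ^ 2) ^ (P.a - 4⁻¹) * (4 * s ^ (-(4⁻¹:ℝ))) := by
    rw [MeasureTheory.integral_const_mul, integral_Ioi_rpow_of_lt (by norm_num) hs0]
    congr 1
    rw [show (-(5/4 : ℝ)) + 1 = -(4⁻¹:ℝ) by norm_num]
    ring
  have h3 : s ^ (-(4⁻¹:ℝ)) = δ ^ (-(4⁻¹:ℝ)) * (τ ^ 2) ^ ((4⁻¹:ℝ)) := by
    rw [hs_def, Real.div_rpow hδ.le hw.le, Real.rpow_neg hδ.le, Real.rpow_neg hw.le,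
      div_inv_eq_mul, ← Real.rpow_neg hδ.le]
  have hpow : (τ ^ 2) ^ (P.a - 4⁻¹) * (τ ^ 2) ^ ((4⁻¹:ℝ)) = (τ ^ 2) ^ P.a := by
    rw [← Real.rpow_add hw]; ring_nf
  have hδ4 : δ ^ (-(1:ℝ)/4) = δ ^ (-(4⁻¹:ℝ)) := by norm_num
  calc ∫ t in Ioi s, nf P x τ t
      ≤ C5 P δ * (x ^ 2) ^ (-k) * (τ ^ 2) ^ (P.a - 4⁻¹) * (4 * s ^ (-(4⁻¹:ℝ))) := by
        rw [← h2]; exact h1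
    _ = C6 P δ * (x ^ 2) ^ (-k) * ((τ ^ 2) ^ (P.a - 4⁻¹) * (τ ^ 2) ^ ((4⁻¹:ℝ))) := by
        rw [h3]; unfold C6; rw [hδ4]; ring
    _ = C6 P δ * (x ^ 2) ^ (-k) * (τ ^ 2) ^ P.a := by rw [hpow]

/-- Key bound on the bias. -/
lemma key_bound (P : Prior) (hI : IntegrableOn (Bf P) (Ioc (0:ℝ) 1)) {τ x δ : ℝ}
    (hτ0 : 0 < τ) (hδ : 0 < δ) (hx1 : 1 ≤ x ^ 2) (ht₀u : P.t₀ ≤ x ^ 2 / τ ^ 2)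
    (hsδ : τ ^ 2 ≤ δ) :
    |T P τ x - x| ≤
      (Iconst P / CD P) * ((x ^ 2) ^ (P.a + 1) * Real.exp (-x ^ 2 / (2 * (1 + δ)))) *
        (τ ^ 2) ^ (-P.a)
      + (C6 P δ / CD P) * (x ^ 2) ^ (-(4⁻¹:ℝ)) := by
  have hw : (0:ℝ) < τ ^ 2 := by positivity
  have hz : (0:ℝ) < x ^ 2 := by linarith
  have hx0 : x ≠ 0 := by intro h; rw [h] at hz; simp at hz
  set E : ℝ := Real.exp (-x ^ 2 / (2 * (1 + δ))) with hE_def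
  have hE : 0 < E := Real.exp_pos _
  set N : ℝ := ∫ t in Ioi (0:ℝ), nf P x τ t with hN_def
  set D : ℝ := ∫ t in Ioi (0:ℝ), wt P x τ t with hD_def
  set Dl : ℝ := CD P * (x ^ 2) ^ (-(P.a + 2⁻¹)) * (τ ^ 2) ^ P.a with hDl_def
  have hDl_pos : 0 < Dl := by
    rw [hDl_def]
    have h1 := CD_pos P
    have h2 : (0:ℝ) < (x ^ 2) ^ (-(P.a + 2⁻¹)) := Real.rpow_pos_of_pos hz _
    have h3 : (0:ℝ) < (τ ^ 2) ^ P.a := Real.rpow_pos_of_pos hw _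
    positivity
  have hD_lb : Dl ≤ D := D_lower P hI hτ0 hx1 ht₀u
  have hD_pos : 0 < D := lt_of_lt_of_le hDl_pos hD_lb
  have hN_nonneg : 0 ≤ N :=
    MeasureTheory.setIntegral_nonneg measurableSet_Ioi (fun t ht => nf_nonneg P x τ ht)
  -- split the numerator
  set s : ℝ := δ / τ ^ 2 with hs_def
  have hs0 : 0 < s := by positivity
  set Q : ℝ := Iconst P * E + C6 P δ * (x ^ 2) ^ (-kExp P) * (τ ^ 2) ^ P.a with hQ_def
  have hN_le : N ≤ Q := by
    have hsplit : N = (∫ t in Ioc (0:ℝ) s, nf P x τ t) + ∫ t in Ioi s, nf P x τ t := by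
      rw [hN_def, ← Set.Ioc_union_Ioi_eq_Ioi hs0.le]
      exact MeasureTheory.setIntegral_union (Set.Ioc_disjoint_Ioi le_rfl)
        measurableSet_Ioi
        ((nf_int P hI x τ).mono_set (fun t ht => ht.1))
        ((nf_int P hI x τ).mono_set (fun t ht => lt_trans hs0 ht))
    rw [hsplit, hQ_def]
    exact add_le_add (N_small P hI hτ0 hδ hsδ) (N_large P hI hτ0 hδ hx0)
  have hQ_nonneg : 0 ≤ Q := le_trans hN_nonneg hN_le
  -- the bias identity
  have hTeq : T P τ x - x = -(x * (N / D)) := by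
    have hpe : postExp P (fun κ => κ) x τ = N / D := rfl
    unfold T
    rw [hpe]; ring
  have habs : |T P τ x - x| = |x| * (N / D) := by
    rw [hTeq, abs_neg, abs_mul, abs_of_nonneg (div_nonneg hN_nonneg hD_pos.le)]
  -- monotonicity
  have hmono : |x| * (N / D) ≤ |x| * (Q / Dl) :=
    mul_le_mul_of_nonneg_left (div_le_div₀ hQ_nonneg hN_le hDl_pos hD_lb) (abs_nonneg x)
  -- final algebra
  have hxz : |x| = (x ^ 2) ^ ((2:ℝ)⁻¹) := by
    rw [← sq_abs, ← Real.rpow_natCast |x| 2, ← Real.rpow_mul (abs_nonneg x)]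
    norm_num
  have e1 : (x ^ 2) ^ (P.a + 1) * (x ^ 2) ^ (-(P.a + 2⁻¹)) = (x ^ 2) ^ ((2:ℝ)⁻¹) := by
    rw [← Real.rpow_add hz]; congr 1; ring
  have e2 : (τ ^ 2) ^ (-P.a) * (τ ^ 2) ^ P.a = 1 := by
    rw [← Real.rpow_add hw, neg_add_cancel, Real.rpow_zero]
  have e3 : (x ^ 2) ^ (-(4⁻¹:ℝ)) * (x ^ 2) ^ (-(P.a + 2⁻¹)) =
      (x ^ 2) ^ (-kExp P) * (x ^ 2) ^ ((2:ℝ)⁻¹) := by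
    rw [← Real.rpow_add hz, ← Real.rpow_add hz]; congr 1; unfold kExp; ring
  have e4 : Iconst P / CD P * CD P = Iconst P := div_mul_cancel₀ _ (CD_pos P).ne'
  have e5 : C6 P δ / CD P * CD P = C6 P δ := div_mul_cancel₀ _ (CD_pos P).ne'
  have halg : |x| * (Q / Dl) =
      (Iconst P / CD P) * ((x ^ 2) ^ (P.a + 1) * E) * (τ ^ 2) ^ (-P.a)
      + (C6 P δ / CD P) * (x ^ 2) ^ (-(4⁻¹:ℝ)) := by
    rw [hxz, hQ_def, hDl_def, mul_div_assoc']
    rw [div_eq_iff hDl_pos.ne']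
    rw [hDl_def]
    linear_combination
      (-((x ^ 2) ^ (P.a + 1) * E * (τ ^ 2) ^ (-P.a) * (x ^ 2) ^ (-(P.a + 2⁻¹)) *
        (τ ^ 2) ^ P.a)) * e4 +
      (-((x ^ 2) ^ (-(4⁻¹:ℝ)) * (x ^ 2) ^ (-(P.a + 2⁻¹)) * (τ ^ 2) ^ P.a)) * e5 +
      (-(Iconst P * E * (τ ^ 2) ^ (-P.a) * (τ ^ 2) ^ P.a)) * e1 +
      (-(Iconst P * E * (x ^ 2) ^ ((2:ℝ)⁻¹))) * e2 +
      (-(C6 P δ * (τ ^ 2) ^ P.a)) * e3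
  rw [habs]
  calc |x| * (N / D) ≤ |x| * (Q / Dl) := hmono
    _ = _ := halg
end BiasAux

open BiasAux in
set_option maxHeartbeats 2000000 in
/-- Lemma A.3: there is a dominating function `h(x, τ)` for
`|T_τ(x) - x|` such that for every `ρ > c`,
`sup_{|x| > √(ρ log(1/τ^{2a}))} h(x, τ) → 0` as `τ → 0`. -/
theorem bayes_estimate_bias_bound (P : Prior) (c : ℝ) (hc : 2 < c) :
    ∃ h : ℝ → ℝ → ℝ,
      (∀ x : ℝ, ∀ τ ∈ Ioo (0:ℝ) 1, 0 ≤ h x τ ∧ |T P τ x - x| ≤ h x τ) ∧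
      ∀ ρ > c, ∀ ε > (0:ℝ), ∃ τ₁ > (0:ℝ), ∀ τ ∈ Ioo (0:ℝ) 1, τ < τ₁ →
        ∀ x : ℝ, Real.sqrt (ρ * Real.log (1 / τ ^ (2 * P.a))) < |x| → h x τ < ε := by
  refine ⟨fun x τ => |T P τ x - x|, fun x τ _ => ⟨abs_nonneg _, le_refl _⟩, ?_⟩
  intro ρ hρ ε hε
  by_cases hI : IntegrableOn (Bf P) (Ioc (0:ℝ) 1)
  swap
  · -- non-integrable case : the posterior mean is identically x
    refine ⟨1, one_pos, fun τ hτ _ x _ => ?_⟩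
    show |T P τ x - x| < ε
    have hD : (∫ t in Ioi (0:ℝ), wt P x τ t) = 0 :=
      MeasureTheory.integral_undef (wt_not_int P hI x τ)
    have hT : T P τ x = x := by
      unfold T postExp
      rw [hD, div_zero]; ring
    rw [hT]; simpa using hε
  · -- main case
    set δ : ℝ := (c - 2) / 4 with hδ_def
    have hδ : 0 < δ := by rw [hδ_def]; linarith
    set β : ℝ := (2 * (1 + δ))⁻¹ - c⁻¹ with hβ_def
    have h2δ : 2 * (1 + δ) < c := by rw [hδ_def]; linarith
    have hβ : 0 < β := by
      rw [hβ_def, sub_pos]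
      exact inv_strictAnti₀ (by positivity) h2δ
    set A : ℝ := Iconst P / CD P with hA_def
    set B : ℝ := C6 P δ / CD P with hB_def
    have hA : 0 ≤ A := div_nonneg (Iconst_nonneg P) (CD_pos P).le
    have hB : 0 ≤ B := div_nonneg (C6_pos P hδ).le (CD_pos P).le
    -- the limiting profile
    set ψ : ℝ → ℝ := fun z => A * (z ^ (P.a + 1) * Real.exp (-(β * z))) + B * z ^ (-(4⁻¹:ℝ))
      with hψ_def
    have htend : Tendsto ψ atTop (nhds 0) := by
      have t1 : Tendsto (fun z : ℝ => z ^ (P.a + 1) * Real.exp (-β * z)) atTop (nhds 0) :=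
        tendsto_rpow_mul_exp_neg_mul_atTop_nhds_zero (P.a + 1) β hβ
      have t2 : Tendsto (fun z : ℝ => z ^ (-(4⁻¹:ℝ))) atTop (nhds 0) :=
        tendsto_rpow_neg_atTop (by norm_num)
      have := (t1.const_mul A).add (t2.const_mul B)
      simpa using this
    obtain ⟨z₀, hz₀⟩ := eventually_atTop.1 (htend.eventually (gt_mem_nhds hε))
    set Z : ℝ := max (max 1 P.t₀) z₀ with hZ_def
    refine ⟨min (Real.sqrt δ) (Real.exp (-Z / (2 * P.a * ρ))), by positivity, ?_⟩
    rintro τ ⟨hτ0, hτ1⟩ hττ₁ x hx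
    show |T P τ x - x| < ε
    have hρ0 : 0 < ρ := by linarith
    have ha := P.a_pos
    -- basic facts about the threshold
    have hτδ : τ ^ 2 ≤ δ := by
      have h1 : τ < Real.sqrt δ := lt_of_lt_of_le hττ₁ (min_le_left _ _)
      nlinarith [Real.sq_sqrt hδ.le, Real.sqrt_nonneg δ]
    have hlogτ : Real.log τ < -Z / (2 * P.a * ρ) := by
      have h1 : τ < Real.exp (-Z / (2 * P.a * ρ)) := lt_of_lt_of_le hττ₁ (min_le_right _ _)
      calc Real.log τ < Real.log (Real.exp (-Z / (2 * P.a * ρ))) := Real.log_lt_log hτ0 h1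
        _ = -Z / (2 * P.a * ρ) := Real.log_exp _
    have hlog_eq : Real.log (1 / τ ^ (2 * P.a)) = -(2 * P.a) * Real.log τ := by
      rw [one_div, Real.log_inv, Real.log_rpow hτ0]; ring
    have hZlt : Z < ρ * Real.log (1 / τ ^ (2 * P.a)) := by
      rw [hlog_eq]
      have h2 : -Z / (2 * P.a * ρ) * (-(2 * P.a) * ρ) = Z := by field_simp
      calc Z = -Z / (2 * P.a * ρ) * (-(2 * P.a) * ρ) := h2.symm
        _ < Real.log τ * (-(2 * P.a) * ρ) := by
            apply mul_lt_mul_of_neg_right hlogτ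
            nlinarith
        _ = ρ * (-(2 * P.a) * Real.log τ) := by ring
    have hlog0 : 0 ≤ ρ * Real.log (1 / τ ^ (2 * P.a)) := by
      have h1 : τ ^ (2 * P.a) ≤ 1 :=
        Real.rpow_le_one hτ0.le hτ1.le (by positivity)
      have h2 : (1:ℝ) ≤ 1 / τ ^ (2 * P.a) := by
        rw [le_div_iff₀ (Real.rpow_pos_of_pos hτ0 _)]; linarith
      exact mul_nonneg hρ0.le (Real.log_nonneg h2)
    have hzgt : ρ * Real.log (1 / τ ^ (2 * P.a)) < x ^ 2 := by
      have h1 := Real.sq_sqrt hlog0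
      have h2 : Real.sqrt (ρ * Real.log (1 / τ ^ (2 * P.a))) ^ 2 < |x| ^ 2 := by
        gcongr <;> first | exact Real.sqrt_nonneg _ | exact hx
      rw [h1, sq_abs] at h2
      exact h2
    have hZx : Z < x ^ 2 := lt_trans hZlt hzgt
    have hx1 : 1 ≤ x ^ 2 := by
      have : (1:ℝ) ≤ Z := le_trans (le_max_left 1 P.t₀) (le_max_left _ _)
      linarith
    have hz : (0:ℝ) < x ^ 2 := by linarith
    have hw : (0:ℝ) < τ ^ 2 := by positivity
    have ht₀u : P.t₀ ≤ x ^ 2 / τ ^ 2 := by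
      have h1 : P.t₀ ≤ Z := le_trans (le_max_right 1 P.t₀) (le_max_left _ _)
      have h2 : x ^ 2 ≤ x ^ 2 / τ ^ 2 := by
        rw [le_div_iff₀ hw]
        have hτ2 : τ ^ 2 ≤ 1 := by nlinarith
        nlinarith [mul_le_mul_of_nonneg_left hτ2 (sq_nonneg x)]
      linarith
    -- apply the key bound
    have hkey := key_bound P hI hτ0 hδ hx1 ht₀u hτδ
    -- compare exp term
    have hwexp : (τ ^ 2) ^ (-P.a) ≤ Real.exp (x ^ 2 / ρ) := by
      have hτ2a : (τ ^ 2 : ℝ) ^ P.a = τ ^ (2 * P.a) := by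
        rw [← Real.rpow_natCast τ 2, ← Real.rpow_mul hτ0.le]
        norm_num
      have hpos : (0:ℝ) < τ ^ (2 * P.a) := Real.rpow_pos_of_pos hτ0 _
      have h1 : Real.log (1 / τ ^ (2 * P.a)) < x ^ 2 / ρ := by
        rw [lt_div_iff₀ hρ0]
        linarith [hzgt, mul_comm ρ (Real.log (1 / τ ^ (2 * P.a)))]
      calc (τ ^ 2) ^ (-P.a) = (τ ^ (2 * P.a))⁻¹ := by
            rw [Real.rpow_neg hw.le, hτ2a]
        _ = Real.exp (Real.log (1 / τ ^ (2 * P.a))) := by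
            rw [one_div, Real.exp_log (by positivity)]
        _ ≤ Real.exp (x ^ 2 / ρ) := by
            exact Real.exp_le_exp.2 h1.le
    have hexpcomb : Real.exp (-x ^ 2 / (2 * (1 + δ))) * (τ ^ 2) ^ (-P.a) ≤
        Real.exp (-(β * x ^ 2)) := by
      calc Real.exp (-x ^ 2 / (2 * (1 + δ))) * (τ ^ 2) ^ (-P.a)
          ≤ Real.exp (-x ^ 2 / (2 * (1 + δ))) * Real.exp (x ^ 2 / ρ) := by
            exact mul_le_mul_of_nonneg_left hwexp (Real.exp_pos _).le
        _ = Real.exp (-x ^ 2 / (2 * (1 + δ)) + x ^ 2 / ρ) := (Real.exp_add _ _).symm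
        _ ≤ Real.exp (-(β * x ^ 2)) := by
            apply Real.exp_le_exp.2
            have h1ρ : ρ⁻¹ ≤ c⁻¹ := by
              apply inv_anti₀ (by linarith) hρ.le
            have hd : (0:ℝ) < 2 * (1 + δ) := by positivity
            have e1 : -x ^ 2 / (2 * (1 + δ)) = -(x ^ 2 * (2 * (1 + δ))⁻¹) := by
              field_simp
            have e2 : x ^ 2 / ρ = x ^ 2 * ρ⁻¹ := by ring
            rw [e1, e2, hβ_def]
            nlinarith [mul_le_mul_of_nonneg_left h1ρ hz.le]
    -- put everything together
    have hfinal : |T P τ x - x| ≤ ψ (x ^ 2) := by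
      rw [hψ_def]
      calc |T P τ x - x| ≤
          A * ((x ^ 2) ^ (P.a + 1) * Real.exp (-x ^ 2 / (2 * (1 + δ)))) * (τ ^ 2) ^ (-P.a)
          + B * (x ^ 2) ^ (-(4⁻¹:ℝ)) := hkey
        _ ≤ A * ((x ^ 2) ^ (P.a + 1) * Real.exp (-(β * x ^ 2))) + B * (x ^ 2) ^ (-(4⁻¹:ℝ)) := by
            apply add_le_add_left
            have hpownn : (0:ℝ) ≤ (x ^ 2) ^ (P.a + 1) := Real.rpow_nonneg hz.le _
            calc A * ((x ^ 2) ^ (P.a + 1) * Real.exp (-x ^ 2 / (2 * (1 + δ)))) *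
                  (τ ^ 2) ^ (-P.a)
                = A * ((x ^ 2) ^ (P.a + 1) *
                    (Real.exp (-x ^ 2 / (2 * (1 + δ))) * (τ ^ 2) ^ (-P.a))) := by ring
              _ ≤ A * ((x ^ 2) ^ (P.a + 1) * Real.exp (-(β * x ^ 2))) := by
                  apply mul_le_mul_of_nonneg_left _ hA
                  exact mul_le_mul_of_nonneg_left hexpcomb hpownn
    have hψlt : ψ (x ^ 2) < ε := hz₀ (x ^ 2) (by
      have : z₀ ≤ Z := le_max_right _ _
      linarith)
    exact lt_of_le_of_lt hfinal hψlt
end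
end

section
/- For the one-group shrinkage prior with a > 0 and any fixed τ ∈ (0,1), the posterior mean satisfies lim_{|x| → ∞} |T_τ(x) − x| = 0; that is, large observations are left asymptotically unshrunk for any fixed value of the global shrinkage parameter. -/
open MeasureTheory Filter Set

noncomputable section

open OneGroup

section Aux

open Real

/-- `u^p e^{-u} ≤ p^p` for `u, p > 0`. -/
lemma aux_rpow_mul_exp_le {p u : ℝ} (hp : 0 < p) (hu : 0 < u) :
    u ^ p * Real.exp (-u) ≤ p ^ p := by
  rw [Real.rpow_def_of_pos hu, Real.rpow_def_of_pos hp, ← Real.exp_add]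
  apply Real.exp_le_exp.mpr
  have h := Real.log_le_sub_one_of_pos (show 0 < u / p by positivity)
  rw [Real.log_div hu.ne' hp.ne'] at h
  have h3 : (Real.log u - Real.log p) * p ≤ (u / p - 1) * p :=
    mul_le_mul_of_nonneg_right h hp.le
  have h4 : (u / p - 1) * p = u - p := by field_simp
  nlinarith

/-- `e^{-u} ≤ p^p * u^{-p}`. -/
lemma aux_exp_neg_le {p u : ℝ} (hp : 0 < p) (hu : 0 < u) :
    Real.exp (-u) ≤ p ^ p * u ^ (-p) := by
  have h := aux_rpow_mul_exp_le hp hu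
  have hup : (0:ℝ) < u ^ p := Real.rpow_pos_of_pos hu p
  rw [Real.rpow_neg hu.le]
  rw [mul_comm, ← le_div_iff₀ hup] at h
  calc Real.exp (-u) ≤ p ^ p / u ^ p := h
    _ = p ^ p * (u ^ p)⁻¹ := by ring

lemma aux_mul4_le {a b c d a' b' c' d' : ℝ} (ha : a ≤ a') (hb : b ≤ b')
    (hc : c ≤ c') (hd : d ≤ d') (h0b : 0 ≤ b) (h0c : 0 ≤ c) (h0d : 0 ≤ d)
    (h0a' : 0 ≤ a') (h0b' : 0 ≤ b') (h0c' : 0 ≤ c') :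
    a * b * c * d ≤ a' * b' * c' * d' := by
  have h1 : a * b ≤ a' * b' := mul_le_mul ha hb h0b h0a'
  have h2 : a * b * c ≤ a' * b' * c' := mul_le_mul h1 hc h0c (mul_nonneg h0a' h0b')
  exact mul_le_mul h2 hd h0d (mul_nonneg (mul_nonneg h0a' h0b') h0c')

variable (P : Prior) {τ x t : ℝ}

lemma wt_nonneg (x : ℝ) (ht : 0 < t) : 0 ≤ wt P x τ t := by
  simp only [wt]
  have h1 : (0:ℝ) ≤ (1 + t * τ ^ 2) ^ (-(1:ℝ)/2) := Real.rpow_nonneg (by positivity) _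
  have h2 : (0:ℝ) ≤ t ^ (-P.a - 1) := Real.rpow_nonneg ht.le _
  have h3 : 0 ≤ P.L t := (P.L_pos t ht).le
  positivity

lemma wt_measurable (x τ : ℝ) : Measurable (wt P x τ) := by
  have hL := P.L_meas
  unfold wt
  fun_prop

lemma wt_le_Ioc (hτ0 : 0 < τ) (ht : t ∈ Ioc (0:ℝ) 1) :
    wt P x τ t ≤ Real.exp (-x ^ 2 / (2 * (1 + τ ^ 2))) * (t ^ (-P.a - 1) * P.L t) := by
  obtain ⟨ht0, ht1⟩ := ht
  have hb : (0:ℝ) < 1 + t * τ ^ 2 := by positivity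
  have h1 : (1 + t * τ ^ 2) ^ (-(1:ℝ)/2) ≤ 1 :=
    Real.rpow_le_one_of_one_le_of_nonpos (by nlinarith) (by norm_num)
  have h4 : Real.exp (-x ^ 2 / (2 * (1 + t * τ ^ 2)))
      ≤ Real.exp (-x ^ 2 / (2 * (1 + τ ^ 2))) := by
    apply Real.exp_le_exp.mpr
    rw [neg_div, neg_div, neg_le_neg_iff]
    apply div_le_div_of_nonneg_left (by positivity) (by positivity)
    nlinarith
  have := aux_mul4_le h1 (le_refl (t ^ (-P.a - 1))) (le_refl (P.L t)) h4
    (Real.rpow_nonneg ht0.le _) (P.L_pos t ht0).le (Real.exp_nonneg _)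
    zero_le_one (Real.rpow_nonneg ht0.le _) (P.L_pos t ht0).le
  simp only [wt]
  calc (1 + t * τ ^ 2) ^ (-(1:ℝ)/2) * t ^ (-P.a - 1) * P.L t *
      Real.exp (-x ^ 2 / (2 * (1 + t * τ ^ 2)))
      ≤ 1 * t ^ (-P.a - 1) * P.L t * Real.exp (-x ^ 2 / (2 * (1 + τ ^ 2))) := this
    _ = Real.exp (-x ^ 2 / (2 * (1 + τ ^ 2))) * (t ^ (-P.a - 1) * P.L t) := by ring

lemma wt_ge_Ioc (hτ0 : 0 < τ) (ht : t ∈ Ioc (0:ℝ) 1) :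
    ((1 + τ ^ 2) ^ (-(1:ℝ)/2) * Real.exp (-x ^ 2 / 2)) * (t ^ (-P.a - 1) * P.L t)
      ≤ wt P x τ t := by
  obtain ⟨ht0, ht1⟩ := ht
  have hb : (0:ℝ) < 1 + t * τ ^ 2 := by positivity
  have h1 : (1 + τ ^ 2) ^ (-(1:ℝ)/2) ≤ (1 + t * τ ^ 2) ^ (-(1:ℝ)/2) :=
    Real.rpow_le_rpow_of_nonpos hb (by nlinarith) (by norm_num)
  have h4 : Real.exp (-x ^ 2 / 2) ≤ Real.exp (-x ^ 2 / (2 * (1 + t * τ ^ 2))) := by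
    apply Real.exp_le_exp.mpr
    rw [neg_div, neg_div, neg_le_neg_iff]
    apply div_le_div_of_nonneg_left (by positivity) (by positivity)
    nlinarith
  have := aux_mul4_le h1 (le_refl (t ^ (-P.a - 1))) (le_refl (P.L t)) h4
    (Real.rpow_nonneg ht0.le _) (P.L_pos t ht0).le (Real.exp_nonneg _)
    (Real.rpow_nonneg hb.le _) (Real.rpow_nonneg ht0.le _) (P.L_pos t ht0).le
  simp only [wt]
  calc ((1 + τ ^ 2) ^ (-(1:ℝ)/2) * Real.exp (-x ^ 2 / 2)) * (t ^ (-P.a - 1) * P.L t)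
      = (1 + τ ^ 2) ^ (-(1:ℝ)/2) * t ^ (-P.a - 1) * P.L t * Real.exp (-x ^ 2 / 2) := by
        ring
    _ ≤ _ := this

lemma wt_le_Ioi1 (hτ0 : 0 < τ) (ht : t ∈ Ioi (1:ℝ)) :
    wt P x τ t ≤ (P.M * (τ ^ 2) ^ (-(1:ℝ)/2)) * t ^ (-P.a - 3/2) := by
  have ht1 : (1:ℝ) < t := ht
  have ht0 : (0:ℝ) < t := lt_trans one_pos ht1
  have hb : (0:ℝ) < 1 + t * τ ^ 2 := by positivity
  have h1 : (1 + t * τ ^ 2) ^ (-(1:ℝ)/2) ≤ (t * τ ^ 2) ^ (-(1:ℝ)/2) :=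
    Real.rpow_le_rpow_of_nonpos (by positivity) (by nlinarith) (by norm_num)
  have h1' : (t * τ ^ 2) ^ (-(1:ℝ)/2) = t ^ (-(1:ℝ)/2) * (τ ^ 2) ^ (-(1:ℝ)/2) :=
    Real.mul_rpow ht0.le (by positivity)
  have h4 : Real.exp (-x ^ 2 / (2 * (1 + t * τ ^ 2))) ≤ 1 := by
    rw [Real.exp_le_one_iff, neg_div, neg_nonpos]
    positivity
  have := aux_mul4_le (h1.trans h1'.le) (le_refl (t ^ (-P.a - 1))) (P.L_le t ht0) h4
    (Real.rpow_nonneg ht0.le _) (P.L_pos t ht0).le (Real.exp_nonneg _)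
    (by positivity) (Real.rpow_nonneg ht0.le _) P.M_pos.le
  simp only [wt]
  calc (1 + t * τ ^ 2) ^ (-(1:ℝ)/2) * t ^ (-P.a - 1) * P.L t *
      Real.exp (-x ^ 2 / (2 * (1 + t * τ ^ 2)))
      ≤ t ^ (-(1:ℝ)/2) * (τ ^ 2) ^ (-(1:ℝ)/2) * t ^ (-P.a - 1) * P.M * 1 := this
    _ = (P.M * (τ ^ 2) ^ (-(1:ℝ)/2)) * (t ^ (-(1:ℝ)/2) * t ^ (-P.a - 1)) := by ring
    _ = (P.M * (τ ^ 2) ^ (-(1:ℝ)/2)) * t ^ (-P.a - 3/2) := by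
        rw [← Real.rpow_add ht0]; ring_nf

lemma wt_integrableOn (hτ0 : 0 < τ)
    (hInt : IntegrableOn (fun t : ℝ => t ^ (-P.a - 1) * P.L t) (Ioc 0 1) volume) :
    IntegrableOn (wt P x τ) (Ioi (0:ℝ)) volume := by
  have hmeas : AEStronglyMeasurable (wt P x τ) (volume.restrict (Ioi (0:ℝ))) :=
    (wt_measurable P x τ).aestronglyMeasurable
  rw [← Set.Ioc_union_Ioi_eq_Ioi (zero_le_one' ℝ)]
  apply MeasureTheory.IntegrableOn.union
  · -- on Ioc 0 1
    apply Integrable.mono (hInt.const_mul (Real.exp (-x ^ 2 / (2 * (1 + τ ^ 2)))))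
      ((wt_measurable P x τ).aestronglyMeasurable)
    rw [ae_restrict_iff' measurableSet_Ioc]
    apply ae_of_all
    intro t ht
    rw [Real.norm_eq_abs, Real.norm_eq_abs, abs_of_nonneg (wt_nonneg P x ht.1),
      abs_of_nonneg]
    · exact wt_le_Ioc P hτ0 ht
    · exact mul_nonneg (Real.exp_nonneg _)
        (mul_nonneg (Real.rpow_nonneg ht.1.le _) (P.L_pos t ht.1).le)
  · -- on Ioi 1
    apply Integrable.mono (((integrableOn_Ioi_rpow_of_lt
      (show -P.a - 3/2 < -1 by nlinarith [P.a_pos]) one_pos)).const_mul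
      (P.M * (τ ^ 2) ^ (-(1:ℝ)/2)))
      ((wt_measurable P x τ).aestronglyMeasurable)
    rw [ae_restrict_iff' measurableSet_Ioi]
    apply ae_of_all
    intro t ht
    have ht0 : (0:ℝ) < t := lt_trans one_pos ht
    rw [Real.norm_eq_abs, Real.norm_eq_abs, abs_of_nonneg (wt_nonneg P x ht0),
      abs_of_nonneg]
    · exact wt_le_Ioi1 P hτ0 ht
    · exact mul_nonneg (mul_nonneg P.M_pos.le (Real.rpow_nonneg (by positivity) _))
        (Real.rpow_nonneg ht0.le _)

/-- Tail bound with explicit decay in `x`, on `Ioi 1`. -/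
lemma wt_le_Ioi1_decay (hτ0 : 0 < τ) (hτ1 : τ ≤ 1) (hx : x ≠ 0) (ht : t ∈ Ioi (1:ℝ)) :
    wt P x τ t ≤ (P.M * (τ ^ 2) ^ (-(1:ℝ)/2) *
      ((P.a + 1/4) ^ (P.a + 1/4) * (4:ℝ) ^ (P.a + 1/4)) * (x ^ 2) ^ (-(P.a + 1/4)))
      * t ^ (-(5:ℝ)/4) := by
  set p : ℝ := P.a + 1/4 with hp
  have hppos : 0 < p := by have := P.a_pos; positivity
  have ht1 : (1:ℝ) < t := ht
  have ht0 : (0:ℝ) < t := lt_trans one_pos ht1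
  have hb : (0:ℝ) < 1 + t * τ ^ 2 := by positivity
  have hx2 : (0:ℝ) < x ^ 2 := by positivity
  have h1 : (1 + t * τ ^ 2) ^ (-(1:ℝ)/2) ≤ (t * τ ^ 2) ^ (-(1:ℝ)/2) :=
    Real.rpow_le_rpow_of_nonpos (by positivity) (by nlinarith) (by norm_num)
  have h1' : (t * τ ^ 2) ^ (-(1:ℝ)/2) = (τ ^ 2) ^ (-(1:ℝ)/2) * t ^ (-(1:ℝ)/2) := by
    rw [Real.mul_rpow ht0.le (by positivity)]; ring
  -- exponential bound
  have h4 : Real.exp (-x ^ 2 / (2 * (1 + t * τ ^ 2)))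
      ≤ p ^ p * (4:ℝ) ^ p * ((x ^ 2) ^ (-p) * t ^ p) := by
    have hτ2 : τ ^ 2 ≤ 1 := by nlinarith
    have hden : 2 * (1 + t * τ ^ 2) ≤ 4 * t := by
      nlinarith [mul_le_mul_of_nonneg_left hτ2 ht0.le]
    have step1 : Real.exp (-x ^ 2 / (2 * (1 + t * τ ^ 2)))
        ≤ Real.exp (-(x ^ 2 / (4 * t))) := by
      apply Real.exp_le_exp.mpr
      rw [neg_div, neg_le_neg_iff]
      apply div_le_div_of_nonneg_left hx2.le (by positivity) hden
    have step2 : Real.exp (-(x ^ 2 / (4 * t))) ≤ p ^ p * (x ^ 2 / (4 * t)) ^ (-p) :=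
      aux_exp_neg_le hppos (by positivity)
    have step3 : (x ^ 2 / (4 * t)) ^ (-p) = (x ^ 2) ^ (-p) * ((4:ℝ) ^ p * t ^ p) := by
      rw [Real.div_rpow hx2.le (by positivity), Real.rpow_neg (by positivity : (0:ℝ) ≤ 4 * t),
        Real.mul_rpow (by norm_num : (0:ℝ) ≤ 4) ht0.le]
      field_simp
    calc Real.exp (-x ^ 2 / (2 * (1 + t * τ ^ 2))) ≤ p ^ p * (x ^ 2 / (4 * t)) ^ (-p) :=
          step1.trans step2
      _ = p ^ p * (4:ℝ) ^ p * ((x ^ 2) ^ (-p) * t ^ p) := by rw [step3]; ring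
  have key := aux_mul4_le (h1.trans h1'.le) (le_refl (t ^ (-P.a - 1))) (P.L_le t ht0) h4
    (Real.rpow_nonneg ht0.le _) (P.L_pos t ht0).le (Real.exp_nonneg _)
    (by positivity) (Real.rpow_nonneg ht0.le _) P.M_pos.le
  simp only [wt]
  refine key.trans (le_of_eq ?_)
  have hpow : t ^ (-(1:ℝ)/2) * t ^ (-P.a - 1) * t ^ p = t ^ (-(5:ℝ)/4) := by
    rw [← Real.rpow_add ht0, ← Real.rpow_add ht0]
    congr 1
    rw [hp]; ring
  calc (τ ^ 2) ^ (-(1:ℝ)/2) * t ^ (-(1:ℝ)/2) * t ^ (-P.a - 1) * P.M *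
      (p ^ p * (4:ℝ) ^ p * ((x ^ 2) ^ (-p) * t ^ p))
      = (P.M * (τ ^ 2) ^ (-(1:ℝ)/2) * (p ^ p * (4:ℝ) ^ p) * (x ^ 2) ^ (-p)) *
        (t ^ (-(1:ℝ)/2) * t ^ (-P.a - 1) * t ^ p) := by ring
    _ = _ := by rw [hpow]

lemma denom_lb (hτ0 : 0 < τ)
    (hInt : IntegrableOn (wt P x τ) (Ioi (0:ℝ)) volume)
    (ht₀ : P.t₀ ≤ x ^ 2) (hτx : 1 ≤ x ^ 2 * τ ^ 2) :
    ((3 * τ ^ 2) ^ (-(1:ℝ)/2) * (2:ℝ) ^ (-P.a - 1) * P.c₀ * Real.exp (-1/(2*τ^2))) *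
      (x ^ 2) ^ (-P.a - 1/2) ≤ ∫ t in Ioi (0:ℝ), wt P x τ t := by
  have hτ2 : (0:ℝ) < τ ^ 2 := by positivity
  have hx2 : (0:ℝ) < x ^ 2 := by nlinarith
  set m : ℝ := (1 + 2*x^2*τ^2) ^ (-(1:ℝ)/2) * (2*x^2) ^ (-P.a - 1) * P.c₀ *
    Real.exp (-1/(2*τ^2)) with hm_def
  have hsub : Ioc (x^2) (2*x^2) ⊆ Ioi (0:ℝ) := fun t ht => lt_trans hx2 ht.1
  -- pointwise bound on the window
  have hpt : ∀ t ∈ Ioc (x^2) (2*x^2), m ≤ wt P x τ t := by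
    intro t ht
    obtain ⟨ht1, ht2⟩ := ht
    have ht0 : (0:ℝ) < t := lt_trans hx2 ht1
    have hb : (0:ℝ) < 1 + t * τ ^ 2 := by positivity
    have hA : (1 + 2*x^2*τ^2) ^ (-(1:ℝ)/2) ≤ (1 + t * τ ^ 2) ^ (-(1:ℝ)/2) :=
      Real.rpow_le_rpow_of_nonpos hb (by nlinarith) (by norm_num)
    have hB : (2*x^2) ^ (-P.a - 1) ≤ t ^ (-P.a - 1) :=
      Real.rpow_le_rpow_of_nonpos ht0 ht2 (by nlinarith [P.a_pos])
    have hC : P.c₀ ≤ P.L t := P.L_ge t (le_trans ht₀ ht1.le)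
    have hD : Real.exp (-1/(2*τ^2)) ≤ Real.exp (-x ^ 2 / (2 * (1 + t * τ ^ 2))) := by
      apply Real.exp_le_exp.mpr
      rw [neg_div, neg_div, neg_le_neg_iff, div_le_div_iff₀ (by positivity) (by positivity)]
      nlinarith [mul_le_mul_of_nonneg_right ht1.le hτ2.le]
    have := aux_mul4_le hA hB hC hD (Real.rpow_nonneg (by positivity) _) P.c₀_pos.le
      (Real.exp_nonneg _) (Real.rpow_nonneg hb.le _) (Real.rpow_nonneg ht0.le _)
      (P.L_pos t ht0).le
    simpa only [wt] using this
  have hwin : m * x ^ 2 ≤ ∫ t in Ioc (x^2) (2*x^2), wt P x τ t := by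
    have h := MeasureTheory.setIntegral_ge_of_const_le measurableSet_Ioc
      (measure_Ioc_lt_top).ne hpt (hInt.mono_set hsub)
    rw [measureReal_def, Real.volume_Ioc, ENNReal.toReal_ofReal (by nlinarith), show 2*x^2 - x^2 = x^2 by ring, smul_eq_mul] at h; linarith
  have hmono : (∫ t in Ioc (x^2) (2*x^2), wt P x τ t) ≤ ∫ t in Ioi (0:ℝ), wt P x τ t := by
    apply MeasureTheory.setIntegral_mono_set hInt
    · rw [EventuallyLE, ae_restrict_iff' measurableSet_Ioi]
      exact ae_of_all _ fun t ht => wt_nonneg P x ht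
    · exact HasSubset.Subset.eventuallyLE hsub
  refine le_trans ?_ (hwin.trans hmono)
  -- constant comparison
  have h31 : (3 * τ ^ 2) ^ (-(1:ℝ)/2) * (x ^ 2) ^ (-(1:ℝ)/2)
      ≤ (1 + 2*x^2*τ^2) ^ (-(1:ℝ)/2) := by
    rw [← Real.mul_rpow (by positivity) hx2.le]
    exact Real.rpow_le_rpow_of_nonpos (by positivity) (by nlinarith) (by norm_num)
  have h2eq : (2 * x ^ 2) ^ (-P.a - 1) = 2 ^ (-P.a - 1) * (x^2) ^ (-P.a - 1) :=
    Real.mul_rpow (by norm_num) hx2.le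
  have hsplit : (x^2) ^ (-(1:ℝ)/2) * (x^2) ^ (-P.a - 1) * (x^2) ^ (1:ℝ)
      = (x^2) ^ (-P.a - 1/2) := by
    rw [← Real.rpow_add hx2, ← Real.rpow_add hx2]
    congr 1; ring
  calc ((3 * τ ^ 2) ^ (-(1:ℝ)/2) * (2:ℝ) ^ (-P.a - 1) * P.c₀ * Real.exp (-1/(2*τ^2))) *
      (x ^ 2) ^ (-P.a - 1/2)
      = ((3 * τ ^ 2) ^ (-(1:ℝ)/2) * (x ^ 2) ^ (-(1:ℝ)/2)) *
        ((2:ℝ) ^ (-P.a - 1) * (x^2) ^ (-P.a - 1)) * P.c₀ * Real.exp (-1/(2*τ^2)) *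
        (x ^ 2) := by
        rw [← hsplit, Real.rpow_one]; ring
    _ ≤ (1 + 2*x^2*τ^2) ^ (-(1:ℝ)/2) *
        ((2:ℝ) ^ (-P.a - 1) * (x^2) ^ (-P.a - 1)) * P.c₀ * Real.exp (-1/(2*τ^2)) *
        (x ^ 2) := by
        have hrest : (0:ℝ) ≤ ((2:ℝ) ^ (-P.a - 1) * (x^2) ^ (-P.a - 1)) * P.c₀ *
            Real.exp (-1/(2*τ^2)) * (x ^ 2) := by
          have := Real.rpow_nonneg (show (0:ℝ) ≤ 2 by norm_num) (-P.a - 1)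
          have := Real.rpow_nonneg hx2.le (-P.a - 1)
          have := P.c₀_pos.le
          positivity
        nlinarith [mul_le_mul_of_nonneg_right h31 hrest]
    _ = m * x ^ 2 := by rw [hm_def, h2eq]

lemma num_ub (hτ0 : 0 < τ) (hτ1 : τ ≤ 1) (hx : x ≠ 0)
    (hInt : IntegrableOn (fun t : ℝ => t ^ (-P.a - 1) * P.L t) (Ioc 0 1) volume) :
    (∫ t in Ioi (0:ℝ), 1 / (1 + t * τ ^ 2) * wt P x τ t)
      ≤ 4 / x ^ 2 *
        ((((∫ t in Ioc (0:ℝ) 1, t ^ (-P.a - 1) * P.L t) *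
            ((P.a + 1/4) ^ (P.a + 1/4) * (2 * (1 + τ ^ 2)) ^ (P.a + 1/4)) +
          P.M * (τ ^ 2) ^ (-(1:ℝ)/2) *
            ((P.a + 1/4) ^ (P.a + 1/4) * (4:ℝ) ^ (P.a + 1/4)) * 4) *
          (2:ℝ) ^ (P.a + 1/4)) * (x ^ 2) ^ (-(P.a + 1/4))) := by
  set p : ℝ := P.a + 1/4 with hp
  have hppos : 0 < p := by have := P.a_pos; positivity
  have hx2 : (0:ℝ) < x ^ 2 := by positivity
  set x' : ℝ := x / Real.sqrt 2 with hx'def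
  have hx'2 : x' ^ 2 = x ^ 2 / 2 := by
    rw [hx'def, div_pow, Real.sq_sqrt (by norm_num : (0:ℝ) ≤ 2)]
  have hx'2pos : (0:ℝ) < x' ^ 2 := by rw [hx'2]; positivity
  have hIntwt : IntegrableOn (wt P x τ) (Ioi (0:ℝ)) volume := wt_integrableOn P hτ0 hInt
  have hIntwt' : IntegrableOn (wt P x' τ) (Ioi (0:ℝ)) volume := wt_integrableOn P hτ0 hInt
  set C0 : ℝ := ∫ t in Ioc (0:ℝ) 1, t ^ (-P.a - 1) * P.L t with hC0
  have hC0nn : 0 ≤ C0 := by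
    apply MeasureTheory.setIntegral_nonneg measurableSet_Ioc
    intro t ht
    exact mul_nonneg (Real.rpow_nonneg ht.1.le _) (P.L_pos t ht.1).le
  -- Step A : pointwise bound
  have hptA : ∀ t ∈ Ioi (0:ℝ), 1 / (1 + t * τ ^ 2) * wt P x τ t
      ≤ 4 / x ^ 2 * wt P x' τ t := by
    intro t ht
    have ht0 : (0:ℝ) < t := ht
    have hb : (0:ℝ) < 1 + t * τ ^ 2 := by positivity
    set u : ℝ := x ^ 2 / (4 * (1 + t * τ ^ 2)) with hu
    have hupos : 0 < u := by positivity
    set B : ℝ := (1 + t * τ ^ 2) ^ (-(1:ℝ)/2) * t ^ (-P.a - 1) * P.L t with hB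
    have hBnn : 0 ≤ B := by
      have h3 := (P.L_pos t ht0).le
      have h1 : (0:ℝ) ≤ (1 + t * τ ^ 2) ^ (-(1:ℝ)/2) := Real.rpow_nonneg hb.le _
      have h2 : (0:ℝ) ≤ t ^ (-P.a - 1) := Real.rpow_nonneg ht0.le _
      positivity
    have hwt : wt P x τ t = B * (Real.exp (-u) * Real.exp (-u)) := by
      simp only [wt, hB, ← Real.exp_add]
      congr 1
      rw [hu]
      congr 1
      generalize 1 + t * τ ^ 2 = c
      ring
    have hwt' : wt P x' τ t = B * Real.exp (-u) := by
      simp only [wt, hB]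
      congr 1
      rw [hu, hx'2]
      field_simp
      ring
    have hκ : 1 / (1 + t * τ ^ 2) = 4 / x ^ 2 * u := by
      rw [hu]; field_simp
    have hue : u * Real.exp (-u) ≤ 1 := by
      have h := aux_rpow_mul_exp_le one_pos hupos
      simpa [Real.rpow_one] using h
    have hBe : 0 ≤ B * Real.exp (-u) := mul_nonneg hBnn (Real.exp_nonneg _)
    calc 1 / (1 + t * τ ^ 2) * wt P x τ t
        = 4 / x ^ 2 * ((u * Real.exp (-u)) * (B * Real.exp (-u))) := by
          rw [hκ, hwt]; ring
      _ ≤ 4 / x ^ 2 * (1 * (B * Real.exp (-u))) := by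
          apply mul_le_mul_of_nonneg_left _ (by positivity)
          exact mul_le_mul_of_nonneg_right hue hBe
      _ = 4 / x ^ 2 * wt P x' τ t := by rw [hwt']; ring
  -- Step B : integrate the pointwise bound
  have hnumInt : IntegrableOn (fun t => 1 / (1 + t * τ ^ 2) * wt P x τ t)
      (Ioi (0:ℝ)) volume := by
    apply Integrable.mono hIntwt
    · have hL := P.L_meas
      apply Measurable.aestronglyMeasurable
      apply Measurable.mul _ (wt_measurable P x τ)
      fun_prop
    · rw [ae_restrict_iff' measurableSet_Ioi]
      apply ae_of_all
      intro t ht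
      have ht0 : (0:ℝ) < t := ht
      have hb : (0:ℝ) < 1 + t * τ ^ 2 := by positivity
      have hwnn := wt_nonneg P x (τ := τ) ht0
      rw [Real.norm_eq_abs, Real.norm_eq_abs, abs_of_nonneg (by positivity),
        abs_of_nonneg hwnn]
      have hκ1 : 1 / (1 + t * τ ^ 2) ≤ 1 := by
        rw [div_le_one hb]; nlinarith
      nlinarith
  have hstepB : (∫ t in Ioi (0:ℝ), 1 / (1 + t * τ ^ 2) * wt P x τ t)
      ≤ 4 / x ^ 2 * ∫ t in Ioi (0:ℝ), wt P x' τ t := by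
    rw [← MeasureTheory.integral_const_mul]
    exact MeasureTheory.setIntegral_mono_on hnumInt (hIntwt'.const_mul _)
      measurableSet_Ioi hptA
  -- Step C : split the integral of wt x'
  have hsplit : (∫ t in Ioi (0:ℝ), wt P x' τ t)
      = (∫ t in Ioc (0:ℝ) 1, wt P x' τ t) + ∫ t in Ioi (1:ℝ), wt P x' τ t := by
    rw [← MeasureTheory.setIntegral_union (Set.Ioc_disjoint_Ioi le_rfl)
      measurableSet_Ioi
      (hIntwt'.mono_set (fun t ht => ht.1))
      (hIntwt'.mono_set (fun t ht => show (0:ℝ) < t from lt_trans one_pos ht)),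
      Set.Ioc_union_Ioi_eq_Ioi (zero_le_one' ℝ)]
  -- Step D : bound on Ioc 0 1
  have hx'ne : x' ≠ 0 := by
    intro h
    rw [h] at hx'2pos
    simp at hx'2pos
  have hDpt : ∀ t ∈ Ioc (0:ℝ) 1, wt P x' τ t
      ≤ Real.exp (-x' ^ 2 / (2 * (1 + τ ^ 2))) * (t ^ (-P.a - 1) * P.L t) :=
    fun t ht => wt_le_Ioc P hτ0 ht
  have hD : (∫ t in Ioc (0:ℝ) 1, wt P x' τ t)
      ≤ (p ^ p * (2 * (1 + τ ^ 2)) ^ p * (x' ^ 2) ^ (-p)) * C0 := by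
    have h1 : (∫ t in Ioc (0:ℝ) 1, wt P x' τ t)
        ≤ Real.exp (-x' ^ 2 / (2 * (1 + τ ^ 2))) * C0 := by
      rw [hC0, ← MeasureTheory.integral_const_mul]
      exact MeasureTheory.setIntegral_mono_on (hIntwt'.mono_set (fun t ht => ht.1))
        (hInt.const_mul _) measurableSet_Ioc hDpt
    refine h1.trans (mul_le_mul_of_nonneg_right ?_ hC0nn)
    have hu1 : (0:ℝ) < x' ^ 2 / (2 * (1 + τ ^ 2)) := by positivity
    have h2 := aux_exp_neg_le hppos hu1
    have h3 : (x' ^ 2 / (2 * (1 + τ ^ 2))) ^ (-p)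
        = (2 * (1 + τ ^ 2)) ^ p * (x' ^ 2) ^ (-p) := by
      rw [Real.div_rpow hx'2pos.le (by positivity),
        Real.rpow_neg (by positivity : (0:ℝ) ≤ 2 * (1 + τ ^ 2)),
        Real.mul_rpow (by norm_num : (0:ℝ) ≤ 2) (by positivity : (0:ℝ) ≤ 1 + τ ^ 2)]
      rw [division_def, inv_inv]
      ring
    calc Real.exp (-x' ^ 2 / (2 * (1 + τ ^ 2)))
        = Real.exp (-(x' ^ 2 / (2 * (1 + τ ^ 2)))) := by rw [neg_div]
      _ ≤ p ^ p * (x' ^ 2 / (2 * (1 + τ ^ 2))) ^ (-p) := h2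
      _ = p ^ p * (2 * (1 + τ ^ 2)) ^ p * (x' ^ 2) ^ (-p) := by rw [h3]; ring
  -- Step E : bound on Ioi 1
  have hE : (∫ t in Ioi (1:ℝ), wt P x' τ t)
      ≤ (P.M * (τ ^ 2) ^ (-(1:ℝ)/2) * (p ^ p * (4:ℝ) ^ p) * (x' ^ 2) ^ (-p)) * 4 := by
    have h1 : (∫ t in Ioi (1:ℝ), wt P x' τ t)
        ≤ (P.M * (τ ^ 2) ^ (-(1:ℝ)/2) * (p ^ p * (4:ℝ) ^ p) * (x' ^ 2) ^ (-p)) *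
          ∫ t in Ioi (1:ℝ), t ^ (-(5:ℝ)/4) := by
      rw [← MeasureTheory.integral_const_mul]
      apply MeasureTheory.setIntegral_mono_on
        (hIntwt'.mono_set (fun t ht => show (0:ℝ) < t from lt_trans one_pos ht))
        (((integrableOn_Ioi_rpow_of_lt (by norm_num : (-(5:ℝ)/4) < -1)
          one_pos)).const_mul _) measurableSet_Ioi
      intro t ht
      exact wt_le_Ioi1_decay P hτ0 hτ1 hx'ne ht
    have h2 : (∫ t in Ioi (1:ℝ), t ^ (-(5:ℝ)/4)) = 4 := by
      rw [show (-(5:ℝ)/4) = (-5/4 : ℝ) by norm_num,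
        integral_Ioi_rpow_of_lt (by norm_num) one_pos]
      norm_num
    rw [h2] at h1
    exact h1
  -- combine
  have hconv : (x' ^ 2) ^ (-p) = (2:ℝ) ^ p * (x ^ 2) ^ (-p) := by
    rw [hx'2, Real.div_rpow hx2.le (by norm_num : (0:ℝ) ≤ 2),
      Real.rpow_neg (by norm_num : (0:ℝ) ≤ 2)]
    rw [division_def, inv_inv]
    ring
  have hfinal : (∫ t in Ioi (0:ℝ), wt P x' τ t)
      ≤ ((C0 * (p ^ p * (2 * (1 + τ ^ 2)) ^ p) +
          P.M * (τ ^ 2) ^ (-(1:ℝ)/2) * (p ^ p * (4:ℝ) ^ p) * 4) * (2:ℝ) ^ p) *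
        (x ^ 2) ^ (-p) := by
    rw [hsplit]
    calc (∫ t in Ioc (0:ℝ) 1, wt P x' τ t) + ∫ t in Ioi (1:ℝ), wt P x' τ t
        ≤ (p ^ p * (2 * (1 + τ ^ 2)) ^ p * (x' ^ 2) ^ (-p)) * C0 +
          (P.M * (τ ^ 2) ^ (-(1:ℝ)/2) * (p ^ p * (4:ℝ) ^ p) * (x' ^ 2) ^ (-p)) * 4 :=
          add_le_add hD hE
      _ = (C0 * (p ^ p * (2 * (1 + τ ^ 2)) ^ p) +
          P.M * (τ ^ 2) ^ (-(1:ℝ)/2) * (p ^ p * (4:ℝ) ^ p) * 4) * (x' ^ 2) ^ (-p) := by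
          ring
      _ = _ := by rw [hconv]; ring
  refine hstepB.trans ?_
  apply mul_le_mul_of_nonneg_left _ (by positivity)
  exact hfinal

end Aux

/-- Remark A.1: for any fixed `τ ∈ (0,1)`, `|T_τ(x) - x| → 0` as
`|x| → ∞`; large observations are asymptotically left unshrunk. -/
theorem large_signals_unshrunk (P : Prior) (τ : ℝ) (hτ : τ ∈ Ioo (0:ℝ) 1) :
    Tendsto (fun x => |T P τ x - x|) (cocompact ℝ) (nhds 0) := by
  obtain ⟨hτ0, hτ1⟩ := hτ
  by_cases hInt : IntegrableOn (fun t : ℝ => t ^ (-P.a - 1) * P.L t) (Ioc 0 1) volume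
  · -- main case : the prior weight is integrable
    set p : ℝ := P.a + 1/4 with hp
    have hppos : 0 < p := by have := P.a_pos; positivity
    set c1 : ℝ := (3 * τ ^ 2) ^ (-(1:ℝ)/2) * (2:ℝ) ^ (-P.a - 1) * P.c₀ *
      Real.exp (-1/(2*τ^2)) with hc1
    have hc1pos : 0 < c1 := by
      have h1 := Real.rpow_pos_of_pos (show (0:ℝ) < 3*τ^2 by positivity) (-(1:ℝ)/2)
      have h2 := Real.rpow_pos_of_pos (show (0:ℝ) < 2 by norm_num) (-P.a-1)
      have h3 := P.c₀_pos
      positivity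
    set CN : ℝ := ((∫ t in Ioc (0:ℝ) 1, t ^ (-P.a - 1) * P.L t) *
        (p ^ p * (2 * (1 + τ ^ 2)) ^ p) +
        P.M * (τ ^ 2) ^ (-(1:ℝ)/2) * (p ^ p * (4:ℝ) ^ p) * 4) * (2:ℝ) ^ p with hCN
    have hCNnn : 0 ≤ CN := by
      have hC0nn : 0 ≤ ∫ t in Ioc (0:ℝ) 1, t ^ (-P.a - 1) * P.L t := by
        apply MeasureTheory.setIntegral_nonneg measurableSet_Ioc
        intro t ht
        exact mul_nonneg (Real.rpow_nonneg ht.1.le _) (P.L_pos t ht.1).le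
      have h1 : (0:ℝ) ≤ (τ ^ 2) ^ (-(1:ℝ)/2) := Real.rpow_nonneg (by positivity) _
      have h2 : (0:ℝ) ≤ p ^ p := Real.rpow_nonneg hppos.le _
      have h3 : (0:ℝ) ≤ (2 * (1 + τ ^ 2)) ^ p := Real.rpow_nonneg (by positivity) _
      have h4 : (0:ℝ) ≤ (4:ℝ) ^ p := Real.rpow_nonneg (by norm_num) _
      have h5 : (0:ℝ) ≤ (2:ℝ) ^ p := Real.rpow_nonneg (by norm_num) _
      have h6 := P.M_pos.le
      positivity
    set Kc : ℝ := 4 * CN / c1 with hKc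
    have h2 : Tendsto (fun x : ℝ => |x|) (cocompact ℝ) atTop := by
      exact Tendsto.congr (fun x => Real.norm_eq_abs x) (tendsto_norm_cocompact_atTop (E := ℝ))
    apply squeeze_zero' (Eventually.of_forall fun x => abs_nonneg _) ?hle ?hg
    case hg =>
      have h1 : Tendsto (fun y : ℝ => y ^ (-(1:ℝ)/2)) atTop (nhds 0) := by
        have := tendsto_rpow_neg_atTop (show (0:ℝ) < 1/2 by norm_num)
        simpa [neg_div] using this
      have h3 := (h1.comp h2).const_mul Kc
      simpa [Function.comp, mul_zero] using h3
    case hle =>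
      have hev : ∀ᶠ x : ℝ in cocompact ℝ,
          max (max (Real.sqrt P.t₀) τ⁻¹) 1 ≤ |x| :=
        h2.eventually_ge_atTop _
      filter_upwards [hev] with x hx
      -- basic facts about x
      have hx1 : (1:ℝ) ≤ |x| := le_trans (le_max_right _ _) hx
      have hx0 : x ≠ 0 := by
        intro h
        rw [h] at hx1
        simp at hx1
        linarith
      have hxabs : 0 < |x| := abs_pos.mpr hx0
      have hx2 : (0:ℝ) < x ^ 2 := by positivity
      have ht₀x : P.t₀ ≤ x ^ 2 := by
        have hsq : Real.sqrt P.t₀ ≤ |x| :=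
          le_trans (le_trans (le_max_left _ _) (le_max_left _ _)) hx
        have h := Real.sq_sqrt P.t₀_pos.le
        nlinarith [Real.sqrt_nonneg P.t₀, sq_abs x]
      have hτx : 1 ≤ x ^ 2 * τ ^ 2 := by
        have hinv : τ⁻¹ ≤ |x| :=
          le_trans (le_trans (le_max_right _ _) (le_max_left _ _)) hx
        have h1 : τ⁻¹ * τ ≤ |x| * τ := mul_le_mul_of_nonneg_right hinv hτ0.le
        rw [inv_mul_cancel₀ hτ0.ne'] at h1
        nlinarith [sq_abs x]
      -- main estimates
      have hIw : IntegrableOn (wt P x τ) (Ioi (0:ℝ)) volume := wt_integrableOn P hτ0 hInt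
      have hLB := denom_lb P hτ0 hIw ht₀x hτx
      have hUB := num_ub P hτ0 hτ1.le hx0 hInt
      have hLBpos : (0:ℝ) < c1 * (x ^ 2) ^ (-P.a - 1/2) :=
        mul_pos hc1pos (Real.rpow_pos_of_pos hx2 _)
      have hDenpos : (0:ℝ) < ∫ t in Ioi (0:ℝ), wt P x τ t := lt_of_lt_of_le hLBpos hLB
      have hNumnn : (0:ℝ) ≤ ∫ t in Ioi (0:ℝ), 1 / (1 + t * τ ^ 2) * wt P x τ t := by
        apply MeasureTheory.setIntegral_nonneg measurableSet_Ioi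
        intro t ht
        have ht0 : (0:ℝ) < t := ht
        have hb : (0:ℝ) < 1 + t * τ ^ 2 := by positivity
        exact mul_nonneg (by positivity) (wt_nonneg P x ht0)
      have hUBnn : (0:ℝ) ≤ 4 / x ^ 2 * (CN * (x ^ 2) ^ (-p)) := by
        have := Real.rpow_nonneg hx2.le (-p)
        positivity
      -- rewrite T - x
      have hTx : T P τ x - x = -(x * postExp P (fun κ => κ) x τ) := by
        unfold T
        ring
      have hEform : postExp P (fun κ => κ) x τ =
          (∫ t in Ioi (0:ℝ), 1 / (1 + t * τ ^ 2) * wt P x τ t) /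
            (∫ t in Ioi (0:ℝ), wt P x τ t) := rfl
      have hEnn : 0 ≤ postExp P (fun κ => κ) x τ := by
        rw [hEform]
        exact div_nonneg hNumnn hDenpos.le
      rw [hTx, abs_neg, abs_mul, abs_of_nonneg hEnn, hEform]
      -- chain of bounds
      have hchain : (∫ t in Ioi (0:ℝ), 1 / (1 + t * τ ^ 2) * wt P x τ t) /
            (∫ t in Ioi (0:ℝ), wt P x τ t)
          ≤ (4 / x ^ 2 * (CN * (x ^ 2) ^ (-p))) / (c1 * (x ^ 2) ^ (-P.a - 1/2)) :=
        div_le_div₀ hUBnn hUB hLBpos hLB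
      refine le_trans (mul_le_mul_of_nonneg_left hchain (abs_nonneg x)) (le_of_eq ?_)
      -- final algebra
      have hr1 : ((x:ℝ) ^ 2) ^ (-p) / (x ^ 2) ^ (-P.a - 1/2) = (x ^ 2) ^ ((1:ℝ)/4) := by
        rw [← Real.rpow_sub hx2]
        congr 1
        rw [hp]; ring
      have hr2 : ((x:ℝ) ^ 2) ^ ((1:ℝ)/4) = (x ^ 2) ^ (-(3:ℝ)/4) * x ^ 2 := by
        rw [show ((1:ℝ)/4) = (-(3:ℝ)/4) + 1 by norm_num, Real.rpow_add hx2,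
          Real.rpow_one]
      have hr3 : ((x:ℝ) ^ 2) ^ (-(3:ℝ)/4) = |x| ^ (-(3:ℝ)/2) := by
        rw [← sq_abs x, ← Real.rpow_natCast |x| 2, ← Real.rpow_mul (abs_nonneg x)]
        norm_num
      have hr4 : |x| * |x| ^ (-(3:ℝ)/2) = |x| ^ (-(1:ℝ)/2) := by
        nth_rewrite 1 [← Real.rpow_one |x|]
        rw [← Real.rpow_add hxabs]
        norm_num
      have hrne : ((x:ℝ) ^ 2) ^ (-P.a - 1/2) ≠ 0 := (Real.rpow_pos_of_pos hx2 _).ne'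
      calc |x| * ((4 / x ^ 2 * (CN * (x ^ 2) ^ (-p))) / (c1 * (x ^ 2) ^ (-P.a - 1/2)))
          = (4 * CN / c1) * (|x| * (((x ^ 2) ^ (-p) / (x ^ 2) ^ (-P.a - 1/2)) / x ^ 2)) := by
            field_simp
        _ = (4 * CN / c1) * (|x| * (((x ^ 2) ^ (-(3:ℝ)/4) * x ^ 2) / x ^ 2)) := by
            rw [hr1, hr2]
        _ = (4 * CN / c1) * (|x| * (x ^ 2) ^ (-(3:ℝ)/4)) := by
            rw [mul_div_cancel_right₀ _ hx2.ne']
        _ = (4 * CN / c1) * (|x| * |x| ^ (-(3:ℝ)/2)) := by rw [hr3]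
        _ = Kc * |x| ^ (-(1:ℝ)/2) := by rw [hr4, hKc]
  · -- degenerate case : the posterior weight is not integrable, so `postExp = 0`
    have hzero : ∀ x : ℝ, T P τ x - x = 0 := by
      intro x
      have hden : (∫ t in Ioi (0:ℝ), wt P x τ t) = 0 := by
        apply MeasureTheory.integral_undef
        intro hI
        apply hInt
        have hI' : IntegrableOn (wt P x τ) (Ioi (0:ℝ)) volume := hI
        have hsub : IntegrableOn (wt P x τ) (Ioc (0:ℝ) 1) volume :=
          hI'.mono_set (fun t ht => ht.1)
        set ε : ℝ := (1 + τ ^ 2) ^ (-(1:ℝ)/2) * Real.exp (-x ^ 2 / 2) with hε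
        have hεpos : 0 < ε := by
          have := Real.rpow_pos_of_pos (show (0:ℝ) < 1+τ^2 by positivity) (-(1:ℝ)/2)
          positivity
        apply Integrable.mono (hsub.const_mul ε⁻¹)
        · have hL := P.L_meas
          apply Measurable.aestronglyMeasurable
          fun_prop
        · rw [ae_restrict_iff' measurableSet_Ioc]
          apply ae_of_all
          intro t ht
          have hge := wt_ge_Ioc P (x := x) hτ0 ht
          have hAnn : (0:ℝ) ≤ t ^ (-P.a - 1) * P.L t :=
            mul_nonneg (Real.rpow_nonneg ht.1.le _) (P.L_pos t ht.1).le
          have hwnn := wt_nonneg P x (τ := τ) ht.1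
          rw [Real.norm_eq_abs, Real.norm_eq_abs, abs_of_nonneg hAnn,
            abs_of_nonneg (by positivity)]
          rw [← hε] at hge
          nlinarith [mul_le_mul_of_nonneg_left hge (inv_nonneg.mpr hεpos.le),
            inv_mul_cancel₀ hεpos.ne']
      simp [T, postExp, hden]
    have heq : (fun x : ℝ => |T P τ x - x|) = fun _ => (0:ℝ) :=
      funext fun x => by rw [hzero x, abs_zero]
    rw [heq]
    exact tendsto_const_nhds
end
end

section
/- Let L : (0,∞) → (0,∞) be measurable, non-decreasing, slowly varying, bounded above by M ∈ (0,∞), with ∫₀^∞ t^{-3/2} L(t) dt = 1/K for some K > 0. For y > 0, τ > 0 and k > 0 set I_k = ∫₀^∞ (tτ²)^{k−1/2} (1+tτ²)^{-k} t^{-3/2} L(t) e^{tτ²y/(1+tτ²)} dt. Then for every y > 0 and every 0 < τ < 1/√2, I_{5/2} ≥ L(1) τ [ (τ/y)(e^{y/2} − e^{τ²y}) + (1/(√2 y))(e^{y} − e^{y/2}) ]. -/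
open MeasureTheory Filter Set

noncomputable section

open OneGroup

lemma aux_deriv (τ y t : ℝ) (ht : 0 < 1 + t*τ^2) :
    HasDerivAt (fun s => Real.exp (s*τ^2*y/(1+s*τ^2)))
      (y*τ^2/(1+t*τ^2)^2 * Real.exp (t*τ^2*y/(1+t*τ^2))) t := by
  have h1 : HasDerivAt (fun s : ℝ => s*τ^2*y) (τ^2*y) t := by
    simpa [mul_assoc] using (hasDerivAt_id t).mul_const (τ^2*y)
  have h2 : HasDerivAt (fun s : ℝ => 1+s*τ^2) (τ^2) t := by
    simpa using ((hasDerivAt_id t).mul_const (τ^2)).const_add (1:ℝ)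
  have h4 := (h1.div h2 ht.ne').exp
  convert h4 using 1
  · rfl
  simp only [Pi.div_apply]
  field_simp
  ring

lemma aux_cont (τ y : ℝ) {s : Set ℝ} (hs : ∀ t ∈ s, 0 < 1 + t*τ^2) :
    ContinuousOn (fun t => y*τ^2/(1+t*τ^2)^2 * Real.exp (t*τ^2*y/(1+t*τ^2))) s := by
  apply ContinuousOn.mul
  · exact continuousOn_const.div (Continuous.continuousOn (by continuity))
      (fun t ht => pow_ne_zero 2 (hs t ht).ne')
  · exact Real.continuous_exp.comp_continuousOn
      ((Continuous.continuousOn (by continuity)).div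
        (Continuous.continuousOn (by continuity)) (fun t ht => (hs t ht).ne'))

lemma aux_meas (τ y : ℝ) :
    Measurable (fun t => y*τ^2/(1+t*τ^2)^2 * Real.exp (t*τ^2*y/(1+t*τ^2))) := by
  apply Measurable.mul
  · exact measurable_const.div (((measurable_id.mul_const _).const_add 1).pow_const 2)
  · exact (((measurable_id.mul_const _).mul_const y).div
      ((measurable_id.mul_const _).const_add 1)).exp

lemma aux_tendsto (τ y : ℝ) (hτ : 0 < τ) :
    Tendsto (fun t => Real.exp (t*τ^2*y/(1+t*τ^2))) atTop (nhds (Real.exp y)) := by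
  have h0 : Tendsto (fun t : ℝ => 1 + t*τ^2) atTop atTop :=
    tendsto_atTop_add_const_left _ 1 (tendsto_id.atTop_mul_const (by positivity))
  have hinv : Tendsto (fun t : ℝ => (1 + t*τ^2)⁻¹) atTop (nhds 0) := h0.inv_tendsto_atTop
  have h1 : Tendsto (fun t : ℝ => y * (1 - (1+t*τ^2)⁻¹)) atTop (nhds y) := by
    have h := Tendsto.mul (tendsto_const_nhds (x := y))
      (Tendsto.sub (tendsto_const_nhds (x := (1:ℝ))) hinv)
    simpa using h
  have h2 : Tendsto (fun t : ℝ => t*τ^2*y/(1+t*τ^2)) atTop (nhds y) := by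
    apply h1.congr'
    filter_upwards [eventually_gt_atTop 0] with t ht
    have hd : (1:ℝ) + t*τ^2 > 0 := by positivity
    field_simp
    ring
  exact (Real.continuous_exp.tendsto y).comp h2

lemma aux_g_eq (τ y t : ℝ) (hτ : 0 < τ) (ht : 0 < t) (L : ℝ → ℝ) :
    (t * τ ^ 2) ^ ((5:ℝ)/2 - 1/2) * (1 + t * τ ^ 2) ^ (-((5:ℝ)/2)) *
        t ^ (-(3:ℝ)/2) * L t * Real.exp (t * τ ^ 2 * y / (1 + t * τ ^ 2)) =
      τ^4 * Real.sqrt t / ((1+t*τ^2)^2 * Real.sqrt (1+t*τ^2)) *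
        (L t * Real.exp (t*τ^2*y/(1+t*τ^2))) := by
  have hd : (0:ℝ) < 1 + t*τ^2 := by positivity
  have e1 : (t * τ ^ 2) ^ ((5:ℝ)/2 - 1/2) = (t*τ^2)^(2:ℕ) := by
    rw [show ((5:ℝ)/2 - 1/2) = ((2:ℕ):ℝ) by norm_num, Real.rpow_natCast]
  have e2 : (1 + t * τ ^ 2) ^ (-((5:ℝ)/2)) = ((1+t*τ^2)^(2:ℕ) * Real.sqrt (1+t*τ^2))⁻¹ := by
    rw [show (-((5:ℝ)/2)) = -(((2:ℕ):ℝ) + 1/2) by norm_num, Real.rpow_neg hd.le,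
      Real.rpow_add hd, Real.rpow_natCast, Real.sqrt_eq_rpow]
  have e3 : t ^ (-(3:ℝ)/2) = (t * Real.sqrt t)⁻¹ := by
    rw [show (-(3:ℝ)/2) = -(((1:ℕ):ℝ) + 1/2) by norm_num, Real.rpow_neg ht.le,
      Real.rpow_add ht, Real.rpow_natCast, Real.sqrt_eq_rpow, pow_one]
  rw [e1, e2, e3]
  have hst : Real.sqrt t * Real.sqrt t = t := Real.mul_self_sqrt ht.le
  have hst0 : Real.sqrt t ≠ 0 := by positivity
  have hsd0 : Real.sqrt (1 + t*τ^2) ≠ 0 := by positivity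
  field_simp
  linear_combination (-(L t)) * hst

set_option maxHeartbeats 1600000 in
/-- part of Lemma A.6: bound on the integral
`I_{5/2} = ∫₀^∞ (tτ²)^{5/2 - 1/2} (1+tτ²)^{-(5/2)} t^{-3/2} L(t) e^{tτ²y/(1+tτ²)} dt`. -/
theorem I_five_half_lower_bound (L : ℝ → ℝ) (M K : ℝ) (hM : 0 < M) (hK : 0 < K)
    (hLpos : ∀ t : ℝ, 0 < t → 0 < L t)
    (hLmeas : Measurable L)
    (hLmono : ∀ s t : ℝ, 0 < s → s ≤ t → L s ≤ L t)
    (hLslow : ∀ c : ℝ, 0 < c → Tendsto (fun t => L (c * t) / L t) atTop (nhds 1))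
    (hLle : ∀ t : ℝ, 0 < t → L t ≤ M)
    (hLint : (∫ t in Ioi (0:ℝ), t ^ (-(3:ℝ)/2) * L t) = 1 / K)
    (y τ : ℝ) (hy : 0 < y) (hτ : 0 < τ) (hτ' : τ < 1 / Real.sqrt 2) :
    L 1 * τ * (τ / y * (Real.exp (y / 2) - Real.exp (τ ^ 2 * y)) +
        1 / (Real.sqrt 2 * y) * (Real.exp y - Real.exp (y / 2))) ≤
      ∫ t in Ioi (0:ℝ), (t * τ ^ 2) ^ ((5:ℝ)/2 - 1/2) * (1 + t * τ ^ 2) ^ (-((5:ℝ)/2)) *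
        t ^ (-(3:ℝ)/2) * L t * Real.exp (t * τ ^ 2 * y / (1 + t * τ ^ 2)) := by
  set g : ℝ → ℝ := fun t => (t * τ ^ 2) ^ ((5:ℝ)/2 - 1/2) * (1 + t * τ ^ 2) ^ (-((5:ℝ)/2)) *
      t ^ (-(3:ℝ)/2) * L t * Real.exp (t * τ ^ 2 * y / (1 + t * τ ^ 2)) with hgdef
  set G : ℝ → ℝ := fun t => Real.exp (t*τ^2*y/(1+t*τ^2)) with hGdef
  set G' : ℝ → ℝ := fun t => y*τ^2/(1+t*τ^2)^2 * Real.exp (t*τ^2*y/(1+t*τ^2)) with hG'def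
  set a : ℝ := 1/(1-τ^2) with hadef
  set b : ℝ := 1/τ^2 with hbdef
  -- basic numeric facts
  have hτ2 : τ^2 < 1/2 := by
    have h := pow_lt_pow_left₀ hτ' hτ.le (two_ne_zero)
    rwa [div_pow, one_pow, Real.sq_sqrt (by norm_num : (0:ℝ) ≤ 2)] at h
  have h1τ : (0:ℝ) < 1 - τ^2 := by linarith
  have ha : 0 < a := by positivity
  have hb : 0 < b := by positivity
  have ha1 : 1 ≤ a := by
    rw [hadef, le_div_iff₀ h1τ]; nlinarith
  have hab : a ≤ b := by
    rw [hadef, hbdef, div_le_div_iff₀ h1τ (by positivity)]; nlinarith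
  have hdpos : ∀ t : ℝ, 0 < t → (0:ℝ) < 1 + t*τ^2 := fun t ht => by positivity
  have hGle : ∀ t : ℝ, 0 < t → Real.exp (t*τ^2*y/(1+t*τ^2)) ≤ Real.exp y := by
    intro t ht
    apply Real.exp_le_exp.2
    rw [div_le_iff₀ (hdpos t ht)]
    nlinarith [hdpos t ht]
  -- values of the exponent at a and b
  have hGa : a*τ^2*y/(1+a*τ^2) = τ^2*y := by
    rw [hadef]
    have hda : (1:ℝ) + 1/(1-τ^2)*τ^2 = 1/(1-τ^2) := by field_simp; ring
    rw [hda]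
    field_simp
  have hGb : b*τ^2*y/(1+b*τ^2) = y/2 := by
    rw [hbdef]
    have hdb : (1:ℝ) + 1/τ^2*τ^2 = 2 := by
      field_simp
      norm_num
    rw [hdb]
    field_simp
  -- nonnegativity of g
  have hg0 : ∀ t ∈ Ioi (0:ℝ), 0 ≤ g t := by
    intro t ht
    have ht' : (0:ℝ) < t := ht
    have hL := (hLpos t ht').le
    rw [hgdef]
    simp only
    positivity
  -- measurability of g
  have hgmeas : Measurable g := by
    apply Measurable.mul
    apply Measurable.mul
    apply Measurable.mul
    apply Measurable.mul
    · exact (measurable_id.mul_const _).pow_const _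
    · exact ((measurable_id.mul_const _).const_add 1).pow_const _
    · exact measurable_id.pow_const _
    · exact hLmeas
    · exact (((measurable_id.mul_const _).mul_const y).div
        ((measurable_id.mul_const _).const_add 1)).exp
  -- integrability of g on Ioi 0
  have hgint : IntegrableOn g (Ioi 0) := by
    have hsplit : Ioc (0:ℝ) 1 ∪ Ioi 1 = Ioi 0 := Ioc_union_Ioi_eq_Ioi one_pos.le
    rw [← hsplit]
    apply IntegrableOn.union
    · -- on (0,1], bound by constant
      apply Integrable.mono' (integrable_const (τ^4 * (M * Real.exp y)))
        hgmeas.aestronglyMeasurable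
      filter_upwards [ae_restrict_mem measurableSet_Ioc] with t ht
      have ht0 : 0 < t := ht.1
      rw [Real.norm_of_nonneg (hg0 t ht.1), hgdef]
      simp only
      rw [aux_g_eq τ y t hτ ht0 L]
      have hd1 : (1:ℝ) ≤ 1 + t*τ^2 := by nlinarith
      have hsd1 : (1:ℝ) ≤ Real.sqrt (1+t*τ^2) := Real.one_le_sqrt.2 hd1
      have hden : (1:ℝ) ≤ (1+t*τ^2)^2 * Real.sqrt (1+t*τ^2) := by nlinarith
      have h1 : τ^4 * Real.sqrt t / ((1+t*τ^2)^2 * Real.sqrt (1+t*τ^2)) ≤ τ^4 := by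
        rw [div_le_iff₀ (by nlinarith)]
        have hs1 : Real.sqrt t ≤ 1 := by
          rw [show (1:ℝ) = Real.sqrt 1 by simp]
          exact Real.sqrt_le_sqrt ht.2
        nlinarith [Real.sqrt_nonneg t, pow_pos hτ 4]
      have h2 : L t * Real.exp (t*τ^2*y/(1+t*τ^2)) ≤ M * Real.exp y :=
        mul_le_mul (hLle t ht0) (hGle t ht0) (Real.exp_pos _).le hM.le
      exact mul_le_mul h1 h2 (mul_nonneg (hLpos t ht0).le (Real.exp_pos _).le) (by positivity)
    · -- on (1,∞), bound by C t^(-2)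
      apply Integrable.mono' ((integrableOn_Ioi_rpow_of_lt (show (-2:ℝ) < -1 by norm_num)
        one_pos).const_mul (M * Real.exp y / τ)) hgmeas.aestronglyMeasurable
      filter_upwards [ae_restrict_mem measurableSet_Ioi] with t ht
      have ht0 : (0:ℝ) < t := lt_trans one_pos ht
      rw [Real.norm_of_nonneg (hg0 t ht0), hgdef]
      simp only
      rw [aux_g_eq τ y t hτ ht0 L]
      have hst : Real.sqrt t * Real.sqrt t = t := Real.mul_self_sqrt ht0.le
      have hsτ : Real.sqrt (t*τ^2) = Real.sqrt t * τ := by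
        rw [Real.sqrt_mul ht0.le, Real.sqrt_sq hτ.le]
      have hdge : t*τ^2 ≤ 1 + t*τ^2 := by linarith
      have hsdge : Real.sqrt t * τ ≤ Real.sqrt (1+t*τ^2) := by
        rw [← hsτ]; exact Real.sqrt_le_sqrt hdge
      have htτ : (0:ℝ) < t*τ^2 := by positivity
      have hA : (t*τ^2)^2 ≤ (1+t*τ^2)^2 := pow_le_pow_left₀ htτ.le hdge 2
      have hden2 : (t*τ^2)^2 * (Real.sqrt t * τ) ≤ (1+t*τ^2)^2 * Real.sqrt (1+t*τ^2) :=
        mul_le_mul hA hsdge (by positivity) (by positivity)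
      have hrw : t ^ (-(2:ℝ)) = (t^2)⁻¹ := by
        rw [show (-(2:ℝ)) = -((2:ℕ):ℝ) by norm_num, Real.rpow_neg ht0.le, Real.rpow_natCast]
      have h1 : τ^4 * Real.sqrt t / ((1+t*τ^2)^2 * Real.sqrt (1+t*τ^2)) ≤
          τ^4 * Real.sqrt t / ((t*τ^2)^2 * (Real.sqrt t * τ)) := by
        apply div_le_div_of_nonneg_left (by positivity) (by positivity) hden2
      have h1' : τ^4 * Real.sqrt t / ((t*τ^2)^2 * (Real.sqrt t * τ)) = 1/(τ * t^2) := by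
        rw [show (t*τ^2)^2 * (Real.sqrt t * τ) = (τ^4 * Real.sqrt t) * (τ * t^2) by ring,
          div_mul_eq_div_div, div_self (by positivity), one_div]
      have h2 : L t * Real.exp (t*τ^2*y/(1+t*τ^2)) ≤ M * Real.exp y :=
        mul_le_mul (hLle t ht0) (hGle t ht0) (Real.exp_pos _).le hM.le
      have h3 : τ^4 * Real.sqrt t / ((1+t*τ^2)^2 * Real.sqrt (1+t*τ^2)) *
            (L t * Real.exp (t*τ^2*y/(1+t*τ^2))) ≤ (1/(τ * t^2)) * (M * Real.exp y) := by
        rw [← h1']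
        exact mul_le_mul h1 h2
          (mul_nonneg (hLpos t ht0).le (Real.exp_pos _).le) (by positivity)
      have h4 : (1/(τ * t^2)) * (M * Real.exp y) = M * Real.exp y / τ * t ^ (-(2:ℝ)) := by
        rw [hrw]; field_simp
      exact h3.trans_eq h4
  -- integrability of G' on Ioi b
  have hG'int : IntegrableOn G' (Ioi b) := by
    apply Integrable.mono' ((integrableOn_Ioi_rpow_of_lt (show (-2:ℝ) < -1 by norm_num)
      hb).const_mul (y * Real.exp y / τ^2)) (aux_meas τ y).aestronglyMeasurable
    filter_upwards [ae_restrict_mem measurableSet_Ioi] with t ht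
    have ht0 : (0:ℝ) < t := lt_trans hb ht
    have hd := hdpos t ht0
    rw [Real.norm_of_nonneg (by positivity)]
    have hrw : t ^ (-(2:ℝ)) = (t^2)⁻¹ := by
      rw [show (-(2:ℝ)) = -((2:ℕ):ℝ) by norm_num, Real.rpow_neg ht0.le, Real.rpow_natCast]
    have htτ2 : (0:ℝ) < t*τ^2 := by positivity
    have hdge2 : t*τ^2 ≤ 1 + t*τ^2 := by linarith
    have hden : (t*τ^2)^2 ≤ (1+t*τ^2)^2 := pow_le_pow_left₀ htτ2.le hdge2 2
    have h1 : y*τ^2/(1+t*τ^2)^2 ≤ y*τ^2/((t*τ^2)^2) := by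
      apply div_le_div_of_nonneg_left (by positivity) (by positivity) hden
    have h3 : y*τ^2/(1+t*τ^2)^2 * Real.exp (t*τ^2*y/(1+t*τ^2))
        ≤ y*τ^2/((t*τ^2)^2) * Real.exp y :=
      mul_le_mul h1 (hGle t ht0) (Real.exp_pos _).le (by positivity)
    have h4 : y*τ^2/((t*τ^2)^2) * Real.exp y = y * Real.exp y / τ^2 * t ^ (-(2:ℝ)) := by
      rw [hrw]; field_simp
    exact h3.trans_eq h4
  -- FTC on (a, b]
  have int1 : ∫ t in Ioc a b, G' t = Real.exp (y/2) - Real.exp (τ^2*y) := by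
    have hderiv : ∀ x ∈ uIcc a b, HasDerivAt G (G' x) x := by
      intro x hx
      rw [uIcc_of_le hab] at hx
      exact aux_deriv τ y x (hdpos x (lt_of_lt_of_le ha hx.1))
    have hcont : ContinuousOn G' (uIcc a b) := by
      apply aux_cont
      intro x hx
      rw [uIcc_of_le hab] at hx
      exact hdpos x (lt_of_lt_of_le ha hx.1)
    have h := intervalIntegral.integral_eq_sub_of_hasDerivAt hderiv
      (hcont.intervalIntegrable)
    rw [intervalIntegral.integral_of_le hab] at h
    rw [h, hGdef]
    simp only
    rw [hGa, hGb]
  -- FTC on (b, ∞)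
  have int2 : ∫ t in Ioi b, G' t = Real.exp y - Real.exp (y/2) := by
    have h := integral_Ioi_of_hasDerivAt_of_tendsto
      (f := G) (f' := G') (a := b)
      ((aux_deriv τ y b (hdpos b hb)).continuousAt.continuousWithinAt)
      (fun x hx => aux_deriv τ y x (hdpos x (lt_trans hb hx)))
      hG'int (aux_tendsto τ y hτ)
    rw [h, hGdef]
    simp only
    rw [hGb]
  -- pointwise bound on (a, b]
  have key1 : ∀ t ∈ Ioc a b, L 1 * τ^2 / y * G' t ≤ g t := by
    intro t ht
    have hta : a < t := ht.1
    have ht0 : 0 < t := lt_trans ha hta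
    have hd := hdpos t ht0
    have h1a : a * (1-τ^2) = 1 := by rw [hadef]; field_simp
    have hdt : 1 + t*τ^2 ≤ t := by nlinarith
    have hsd : Real.sqrt (1+t*τ^2) ≤ Real.sqrt t := Real.sqrt_le_sqrt hdt
    have hL1 : L 1 ≤ L t := hLmono 1 t one_pos (ha1.trans hta.le)
    have hkey : L 1 * Real.sqrt (1+t*τ^2) ≤ L t * Real.sqrt t :=
      mul_le_mul hL1 hsd (Real.sqrt_nonneg _) (hLpos t ht0).le
    rw [hgdef]
    simp only
    rw [aux_g_eq τ y t hτ ht0 L, hG'def]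
    simp only
    have hsd0 : Real.sqrt (1+t*τ^2) ≠ 0 := by positivity
    have heq : L 1 * τ^2 / y * (y*τ^2/(1+t*τ^2)^2 * Real.exp (t*τ^2*y/(1+t*τ^2))) =
        (L 1 * Real.sqrt (1+t*τ^2)) *
          (τ^4 * Real.exp (t*τ^2*y/(1+t*τ^2)) / ((1+t*τ^2)^2 * Real.sqrt (1+t*τ^2))) := by
      field_simp
    rw [heq]
    calc (L 1 * Real.sqrt (1+t*τ^2)) *
          (τ^4 * Real.exp (t*τ^2*y/(1+t*τ^2)) / ((1+t*τ^2)^2 * Real.sqrt (1+t*τ^2)))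
        ≤ (L t * Real.sqrt t) *
          (τ^4 * Real.exp (t*τ^2*y/(1+t*τ^2)) / ((1+t*τ^2)^2 * Real.sqrt (1+t*τ^2))) := by
          apply mul_le_mul_of_nonneg_right hkey (by positivity)
      _ = τ^4 * Real.sqrt t / ((1+t*τ^2)^2 * Real.sqrt (1+t*τ^2)) *
          (L t * Real.exp (t*τ^2*y/(1+t*τ^2))) := by ring
  -- pointwise bound on (b, ∞)
  have key2 : ∀ t ∈ Ioi b, L 1 * τ / (Real.sqrt 2 * y) * G' t ≤ g t := by
    intro t ht
    have htb : b < t := ht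
    have ht0 : 0 < t := lt_trans hb htb
    have hd := hdpos t ht0
    have h1b : b * τ^2 = 1 := by rw [hbdef]; field_simp
    have hdt : 1 + t*τ^2 ≤ 2*(t*τ^2) := by nlinarith
    have hs2 : Real.sqrt (2*(t*τ^2)) = Real.sqrt 2 * (Real.sqrt t * τ) := by
      rw [Real.sqrt_mul (by norm_num), Real.sqrt_mul ht0.le, Real.sqrt_sq hτ.le]
    have hsd : Real.sqrt (1+t*τ^2) ≤ Real.sqrt 2 * (Real.sqrt t * τ) := by
      rw [← hs2]; exact Real.sqrt_le_sqrt hdt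
    have hL1 : L 1 ≤ L t := hLmono 1 t one_pos (le_trans (ha1.trans hab) htb.le)
    have hkey : L 1 * Real.sqrt (1+t*τ^2) ≤ L t * (Real.sqrt 2 * (Real.sqrt t * τ)) :=
      mul_le_mul hL1 hsd (Real.sqrt_nonneg _) (hLpos t ht0).le
    rw [hgdef]
    simp only
    rw [aux_g_eq τ y t hτ ht0 L, hG'def]
    simp only
    have hsd0 : Real.sqrt (1+t*τ^2) ≠ 0 := by positivity
    have hs20 : Real.sqrt 2 ≠ 0 := by positivity
    have heq : L 1 * τ / (Real.sqrt 2 * y) * (y*τ^2/(1+t*τ^2)^2 * Real.exp (t*τ^2*y/(1+t*τ^2))) =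
        (L 1 * Real.sqrt (1+t*τ^2)) *
          (τ^3 * Real.exp (t*τ^2*y/(1+t*τ^2)) /
            (Real.sqrt 2 * ((1+t*τ^2)^2 * Real.sqrt (1+t*τ^2)))) := by
      field_simp
    rw [heq]
    have hs22 : Real.sqrt 2 * Real.sqrt 2 = 2 := Real.mul_self_sqrt (by norm_num)
    calc (L 1 * Real.sqrt (1+t*τ^2)) *
          (τ^3 * Real.exp (t*τ^2*y/(1+t*τ^2)) /
            (Real.sqrt 2 * ((1+t*τ^2)^2 * Real.sqrt (1+t*τ^2))))
        ≤ (L t * (Real.sqrt 2 * (Real.sqrt t * τ))) *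
          (τ^3 * Real.exp (t*τ^2*y/(1+t*τ^2)) /
            (Real.sqrt 2 * ((1+t*τ^2)^2 * Real.sqrt (1+t*τ^2)))) := by
          apply mul_le_mul_of_nonneg_right hkey (by positivity)
      _ = τ^4 * Real.sqrt t / ((1+t*τ^2)^2 * Real.sqrt (1+t*τ^2)) *
          (L t * Real.exp (t*τ^2*y/(1+t*τ^2))) := by
          field_simp
  -- integrable minorants
  have hmin1int : IntegrableOn (fun t => L 1 * τ^2 / y * G' t) (Ioc a b) := by
    apply Integrable.const_mul
    have hc : ContinuousOn G' (Icc a b) := by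
      apply aux_cont
      intro x hx
      exact hdpos x (lt_of_lt_of_le ha hx.1)
    exact (hc.integrableOn_Icc).mono_set Ioc_subset_Icc_self
  have hmin2int : IntegrableOn (fun t => L 1 * τ / (Real.sqrt 2 * y) * G' t) (Ioi b) :=
    hG'int.const_mul _
  -- assemble
  have hgint1 : IntegrableOn g (Ioc a b) :=
    hgint.mono_set (fun x hx => lt_trans ha hx.1)
  have hgint2 : IntegrableOn g (Ioi b) :=
    hgint.mono_set (fun x hx => lt_trans (lt_of_lt_of_le ha hab) hx)
  have step1 : ∫ t in Ioc a b, L 1 * τ^2 / y * G' t ≤ ∫ t in Ioc a b, g t :=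
    setIntegral_mono_on hmin1int hgint1 measurableSet_Ioc key1
  have step2 : ∫ t in Ioi b, L 1 * τ / (Real.sqrt 2 * y) * G' t ≤ ∫ t in Ioi b, g t :=
    setIntegral_mono_on hmin2int hgint2 measurableSet_Ioi key2
  have hunion : (∫ t in Ioc a b, g t) + ∫ t in Ioi b, g t = ∫ t in Ioi a, g t := by
    rw [← setIntegral_union (Ioc_disjoint_Ioi le_rfl) measurableSet_Ioi hgint1 hgint2,
      Ioc_union_Ioi_eq_Ioi hab]
  have hmono : ∫ t in Ioi a, g t ≤ ∫ t in Ioi 0, g t := by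
    apply setIntegral_mono_set hgint
    · filter_upwards [ae_restrict_mem measurableSet_Ioi] with t ht using hg0 t ht
    · exact HasSubset.Subset.eventuallyLE (Ioi_subset_Ioi ha.le)
  have e1 : ∫ t in Ioc a b, L 1 * τ^2 / y * G' t =
      L 1 * τ^2 / y * (Real.exp (y/2) - Real.exp (τ^2*y)) := by
    rw [integral_const_mul, int1]
  have e2 : ∫ t in Ioi b, L 1 * τ / (Real.sqrt 2 * y) * G' t =
      L 1 * τ / (Real.sqrt 2 * y) * (Real.exp y - Real.exp (y/2)) := by
    rw [integral_const_mul, int2]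
  have final : L 1 * τ^2 / y * (Real.exp (y/2) - Real.exp (τ^2*y)) +
      L 1 * τ / (Real.sqrt 2 * y) * (Real.exp y - Real.exp (y/2)) ≤ ∫ t in Ioi 0, g t := by
    calc L 1 * τ^2 / y * (Real.exp (y/2) - Real.exp (τ^2*y)) +
        L 1 * τ / (Real.sqrt 2 * y) * (Real.exp y - Real.exp (y/2))
        = (∫ t in Ioc a b, L 1 * τ^2 / y * G' t) +
          ∫ t in Ioi b, L 1 * τ / (Real.sqrt 2 * y) * G' t := by rw [e1, e2]
      _ ≤ (∫ t in Ioc a b, g t) + ∫ t in Ioi b, g t := add_le_add step1 step2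
      _ = ∫ t in Ioi a, g t := hunion
      _ ≤ ∫ t in Ioi 0, g t := hmono
  calc L 1 * τ * (τ / y * (Real.exp (y / 2) - Real.exp (τ ^ 2 * y)) +
        1 / (Real.sqrt 2 * y) * (Real.exp y - Real.exp (y / 2)))
      = L 1 * τ^2 / y * (Real.exp (y/2) - Real.exp (τ^2*y)) +
        L 1 * τ / (Real.sqrt 2 * y) * (Real.exp y - Real.exp (y/2)) := by ring
    _ ≤ ∫ t in Ioi 0, g t := final
end
end
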